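/- arXiv:1312.7569 — 3 statements merged into one kernel-verified Lean document; each statement's English description precedes it below -/
import Mathlib

section
/- Let g be a positive even integer and let p_0 be a prime such that the smallest prime q greater than p_0 satisfies q > g/2 + 1 (so that every constellation of sum g has length j with j < q - 1, and g < 2q). Then the ratio of the number of gaps equal to g in 𝒢(p#) to the number of gaps equal to 2 in 𝒢(p#) converges, as p → ∞ through the primes, to the normalized total count of driving terms at p_0: lim_{p→∞} n_{g,1}(p) / n_{2,1}(p) = (Σ_{j=1}^{⌊g/2⌋} n_{g,j}(p_0)) / n_{2,1}(p_0). -/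
open Finset

/-- `b` is the next totative of `P` after `a`: `a < b`, `b` is coprime to `P`,
and no integer strictly between `a` and `b` is coprime to `P`. -/
def IsNextTot (P a b : ℕ) : Prop :=
  a < b ∧ Nat.Coprime b P ∧ ∀ x, a < x → x < b → ¬ Nat.Coprime x P

/-- Starting at `r`, the successive totatives of `P` after `r` occur at the
successive partial sums of the list of gaps `c`. -/
def MatchesGaps (P : ℕ) : ℕ → List ℕ → Prop
  | _, [] => True
  | r, c :: cs => IsNextTot P r (r + c) ∧ MatchesGaps P (r + c) cs

open scoped Classical in
/-- `Ncount p s` : the number of (cyclic) occurrences of the constellation `s`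
in the cycle of gaps `𝒢(p#)`.  Since the pattern of coprimality to `p#` is
periodic with period `p#`, this is the number of totatives `r ∈ [1, p#]` of `p#`
at which the gap pattern `s` begins. -/
noncomputable def Ncount (p : ℕ) (s : List ℕ) : ℕ :=
  ((Finset.Icc 1 (primorial p)).filter
    (fun r => Nat.Coprime r (primorial p) ∧ MatchesGaps (primorial p) r s)).card

open scoped Classical in
/-- `nCount p g j` : the number of (cyclic) occurrences in `𝒢(p#)` of
constellations of length `j` with sum `g` (the driving terms of length `j`
for the gap `g`). -/
noncomputable def nCount (p g j : ℕ) : ℕ :=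
  ((Finset.Icc 1 (primorial p)).filter
    (fun r => Nat.Coprime r (primorial p) ∧
      ∃ c : List ℕ, c.length = j ∧ c.sum = g ∧ MatchesGaps (primorial p) r c)).card

open scoped Classical

/-- number of totatives of `N` strictly between `r` and `r+g` -/
noncomputable def icard (N r g : ℕ) : ℕ :=
  ((Finset.Ioo r (r + g)).filter (fun x => Nat.Coprime x N)).card

lemma matches_iff (N : ℕ) : ∀ g, 0 < g → ∀ r j,
    ((∃ c : List ℕ, c.length = j ∧ c.sum = g ∧ MatchesGaps N r c) ↔
      (Nat.Coprime (r + g) N ∧ icard N r g + 1 = j)) := by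
  intro g
  induction g using Nat.strong_induction_on with
  | _ g IH =>
    intro hg r j
    constructor
    · rintro ⟨c, hlen, hsum, hm⟩
      match c with
      | [] => simp at hsum; omega
      | c₀ :: cs =>
        obtain ⟨⟨hlt, hcop, hbet⟩, hm'⟩ := hm
        have hc₀ : 0 < c₀ := by omega
        match cs with
        | [] =>
          simp only [List.sum_cons, List.sum_nil, add_zero] at hsum
          subst hsum
          refine ⟨hcop, ?_⟩
          have hempty : (Finset.Ioo r (r + c₀)).filter (fun x => Nat.Coprime x N) = ∅ := by
            ext x
            simp only [mem_filter, mem_Ioo, notMem_empty, iff_false, not_and, and_imp]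
            intro h1 h2 h3
            exact hbet x h1 h2 h3
          simp only [List.length_cons, List.length_nil] at hlen
          unfold icard
          rw [hempty]
          simp [← hlen]
        | c₁ :: cs' =>
          have hc₁ : r + c₀ < r + c₀ + c₁ := hm'.1.1
          have hS : c₀ + (c₁ :: cs').sum = g := by
            simpa using hsum
          have hSpos : 0 < (c₁ :: cs').sum := by
            simp only [List.sum_cons]
            omega
          have hlen' : (c₁ :: cs').length = j - 1 ∧ 2 ≤ j := by
            simp only [List.length_cons] at hlen ⊢
            omega
          have h2 := (IH (g - c₀) (by omega) (by omega) (r + c₀) (j - 1)).mp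
            ⟨c₁ :: cs', hlen'.1, by omega, hm'⟩
          have harith : r + c₀ + (g - c₀) = r + g := by omega
          obtain ⟨hcop', hcard'⟩ := h2
          rw [harith] at hcop'
          unfold icard at hcard'
          rw [harith] at hcard'
          refine ⟨hcop', ?_⟩
          have hset : (Finset.Ioo r (r + g)).filter (fun x => Nat.Coprime x N)
              = insert (r + c₀) ((Finset.Ioo (r + c₀) (r + g)).filter (fun x => Nat.Coprime x N)) := by
            ext x
            simp only [mem_filter, mem_Ioo, mem_insert]
            constructor
            · rintro ⟨⟨h1, h2⟩, h3⟩
              rcases lt_trichotomy x (r + c₀) with h | h | h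
              · exact absurd h3 (hbet x h1 h)
              · exact Or.inl h
              · exact Or.inr ⟨⟨h, h2⟩, h3⟩
            · rintro (rfl | ⟨⟨h1, h2⟩, h3⟩)
              · exact ⟨⟨by omega, by omega⟩, hcop⟩
              · exact ⟨⟨by omega, h2⟩, h3⟩
          unfold icard
          rw [hset, card_insert_of_notMem (by simp)]
          omega
    · rintro ⟨hcop, hcard⟩
      have hAne : ((Finset.Ioc r (r + g)).filter (fun x => Nat.Coprime x N)).Nonempty :=
        ⟨r + g, by simp only [mem_filter, mem_Ioc]; exact ⟨⟨by omega, le_rfl⟩, hcop⟩⟩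
      set A := (Finset.Ioc r (r + g)).filter (fun x => Nat.Coprime x N) with hA
      have hsA : A.min' hAne ∈ A := A.min'_mem hAne
      set s := A.min' hAne with hs
      rw [hA, mem_filter, mem_Ioc] at hsA
      obtain ⟨⟨hs1, hs2⟩, hs3⟩ := hsA
      have hnext : IsNextTot N r s := by
        refine ⟨hs1, hs3, fun x hx1 hx2 hx3 => ?_⟩
        have : s ≤ x := A.min'_le x (by rw [hA, mem_filter, mem_Ioc]; exact ⟨⟨hx1, by omega⟩, hx3⟩)
        omega
      rcases eq_or_lt_of_le hs2 with heq | hlt2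
      · have hempty : (Finset.Ioo r (r + g)).filter (fun x => Nat.Coprime x N) = ∅ := by
          ext x
          simp only [mem_filter, mem_Ioo, notMem_empty, iff_false, not_and, and_imp]
          intro h1 h2 h3
          have : s ≤ x := A.min'_le x (by rw [hA, mem_filter, mem_Ioc]; exact ⟨⟨h1, by omega⟩, h3⟩)
          omega
        unfold icard at hcard
        rw [hempty] at hcard
        simp only [card_empty, zero_add] at hcard
        refine ⟨[g], by simp [← hcard], by simp, ?_, trivial⟩
        exact heq ▸ hnext
      · have hset : (Finset.Ioo r (r + g)).filter (fun x => Nat.Coprime x N)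
            = insert s ((Finset.Ioo s (r + g)).filter (fun x => Nat.Coprime x N)) := by
          ext x
          simp only [mem_filter, mem_Ioo, mem_insert]
          constructor
          · rintro ⟨⟨h1, h2⟩, h3⟩
            have : s ≤ x := A.min'_le x (by rw [hA, mem_filter, mem_Ioc]; exact ⟨⟨h1, by omega⟩, h3⟩)
            rcases eq_or_lt_of_le this with h | h
            · exact Or.inl h.symm
            · exact Or.inr ⟨⟨h, h2⟩, h3⟩
          · rintro (rfl | ⟨⟨h1, h2⟩, h3⟩)
            · exact ⟨⟨hs1, hlt2⟩, hs3⟩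
            · exact ⟨⟨by omega, h2⟩, h3⟩
        unfold icard at hcard
        rw [hset, card_insert_of_notMem (by simp)] at hcard
        have hj2 : 2 ≤ j := by omega
        have harith : s + (r + g - s) = r + g := by omega
        obtain ⟨c', hl', hsum', hm'⟩ := (IH (r + g - s) (by omega) (by omega) s (j - 1)).mpr
          ⟨by rw [harith]; exact hcop, by unfold icard; rw [harith]; omega⟩
        refine ⟨(s - r) :: c', by simp [hl']; omega, by simp [hsum']; omega, ?_⟩
        have hrr : r + (s - r) = s := by omega
        rw [MatchesGaps, hrr]
        exact ⟨hnext, hm'⟩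

lemma two_dvd_primorial {p : ℕ} (hp : 2 ≤ p) : 2 ∣ primorial p :=
  Finset.dvd_prod_of_mem _ (by
    simp only [Finset.mem_filter, Finset.mem_range]
    exact ⟨by omega, Nat.prime_two⟩)

lemma not_dvd_primorial {p q : ℕ} (hq : q.Prime) (h : p < q) : ¬ q ∣ primorial p := by
  intro hdvd
  obtain ⟨k, hk, hqk⟩ := hq.prime.exists_mem_finset_dvd hdvd
  simp only [Finset.mem_filter, Finset.mem_range] at hk
  have := (Nat.prime_dvd_prime_iff_eq hq hk.2).mp hqk
  omega

lemma primorial_next {p q : ℕ} (hq : q.Prime) (hpq : p < q)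
    (hmin : ∀ r, r.Prime → p < r → q ≤ r) : primorial q = q * primorial p := by
  unfold primorial
  have h1 : Finset.range (q + 1) = Finset.range (p + 1) ∪ Finset.Ico (p + 1) (q + 1) := by
    rw [Finset.range_eq_Ico, Finset.range_eq_Ico]
    exact (Finset.Ico_union_Ico_eq_Ico (by omega) (by omega)).symm
  have h2 : (Finset.Ico (p + 1) (q + 1)).filter Nat.Prime = {q} := by
    ext k
    simp only [Finset.mem_filter, Finset.mem_Ico, Finset.mem_singleton]
    constructor
    · rintro ⟨⟨h3, h4⟩, h5⟩
      have := hmin k h5 (by omega)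
      omega
    · rintro rfl
      exact ⟨⟨by omega, by omega⟩, hq⟩
  rw [h1, Finset.filter_union, Finset.prod_union, h2, Finset.prod_singleton, mul_comm]
  exact Finset.disjoint_filter_filter (by
    simp only [Finset.disjoint_left, Finset.mem_range, Finset.mem_Ico]
    omega)

lemma nCount_eq (p g j : ℕ) (hg : 0 < g) :
    nCount p g j = ((Finset.Icc 1 (primorial p)).filter
      (fun r => Nat.Coprime r (primorial p) ∧ Nat.Coprime (r + g) (primorial p)
        ∧ icard (primorial p) r g + 1 = j)).card := by
  unfold nCount
  simp only [matches_iff (primorial p) g hg, and_assoc]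

lemma icard_le (N r g : ℕ) (hN : 2 ∣ N) (hr : Nat.Coprime r N) (heven : Even g) :
    icard N r g ≤ g / 2 - 1 := by
  have hodd : ∀ x : ℕ, Nat.Coprime x N → ¬ 2 ∣ x := by
    intro x hx h2
    have : Nat.Coprime x 2 := Nat.Coprime.coprime_dvd_right hN hx
    rw [Nat.coprime_two_right, Nat.odd_iff] at this
    omega
  obtain ⟨m, hm⟩ := heven
  have := Finset.card_le_card_of_injOn (fun x => (x - r) / 2)
    (s := (Finset.Ioo r (r + g)).filter (fun x => Nat.Coprime x N))
    (t := Finset.Icc 1 (g / 2 - 1)) ?_ ?_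
  · unfold icard
    exact this.trans (by simp)
  · intro x hx
    simp only [Finset.mem_coe, Finset.mem_filter, Finset.mem_Ioo] at hx
    obtain ⟨⟨h1, h2⟩, h3⟩ := hx
    have hox := hodd x h3
    have hor := hodd r hr
    simp only [Finset.mem_coe, Finset.mem_Icc]
    omega
  · intro x hx y hy hxy
    simp only [Finset.coe_filter, Finset.mem_Ioo, Set.mem_setOf_eq] at hx hy
    have hox := hodd x hx.2
    have hoy := hodd y hy.2
    have hor := hodd r hr
    simp only at hxy
    omega

lemma nCount_eq_zero (p g j : ℕ) (hp : 2 ≤ p) (hg : 0 < g) (heven : Even g)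
    (hj : g / 2 + 1 ≤ j) : nCount p g j = 0 := by
  rw [nCount_eq p g j hg, Finset.card_eq_zero]
  ext r
  simp only [Finset.mem_filter, Finset.mem_Icc, Finset.notMem_empty, iff_false, not_and, and_imp]
  intro _ _ h1 _ h2
  have := icard_le (primorial p) r g (two_dvd_primorial hp) h1 heven
  obtain ⟨m, hm⟩ := heven
  omega

lemma n21_pos (p : ℕ) (hp : 2 ≤ p) : 0 < nCount p 2 1 := by
  rw [nCount_eq p 2 1 (by norm_num), Finset.card_pos]
  have hN2 : 2 ≤ primorial p := Nat.le_of_dvd (primorial_pos p) (two_dvd_primorial hp)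
  set N := primorial p with hNdef
  refine ⟨N - 1, ?_⟩
  have h1 : N - 1 + 1 = N := by omega
  have h2 : N - 1 + 2 = N + 1 := by omega
  simp only [Finset.mem_filter, Finset.mem_Icc]
  refine ⟨⟨by omega, by omega⟩, ?_, ?_, ?_⟩
  · rw [Nat.coprime_self_sub_left (by omega)]
    exact Nat.coprime_one_left N
  · rw [h2]
    rw [Nat.coprime_self_add_left]
    exact Nat.coprime_one_left N
  · have hIoo : Finset.Ioo (N - 1) (N - 1 + 2) = {N} := by
      ext x
      simp only [Finset.mem_Ioo, Finset.mem_singleton]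
      omega
    unfold icard
    rw [hIoo]
    rw [Finset.filter_singleton]
    rw [if_neg, Finset.card_empty]
    intro hcop
    rw [Nat.Coprime, Nat.gcd_self] at hcop
    omega

lemma odd_of_coprime_even {N x : ℕ} (hN : 2 ∣ N) (hx : Nat.Coprime x N) : x % 2 = 1 := by
  have h2 : Nat.Coprime x 2 := Nat.Coprime.coprime_dvd_right hN hx
  rw [Nat.coprime_two_right, Nat.odd_iff] at h2
  exact h2

lemma card_range_filter_cast {q : ℕ} (hq : 0 < q) (F : Finset (ZMod q)) :
    ((Finset.range q).filter (fun t : ℕ => (↑t : ZMod q) ∈ F)).card = F.card := by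
  haveI : NeZero q := ⟨hq.ne'⟩
  apply Finset.card_nbij' (i := fun t : ℕ => (t : ZMod q)) (j := ZMod.val)
  · intro t ht
    exact (Finset.mem_filter.mp ht).2
  · intro z hz
    simp only [Finset.mem_coe, Finset.mem_filter, Finset.mem_range]
    exact ⟨ZMod.val_lt z, by rw [ZMod.natCast_rightInverse z]; exact hz⟩
  · intro t ht
    exact ZMod.val_cast_of_lt (Finset.mem_range.mp (Finset.mem_filter.mp ht).1)
  · intro z hz
    exact ZMod.natCast_rightInverse z

lemma card_filter_lift {q N : ℕ} (hNpos : 0 < N) (Pred : ℕ → Prop) [DecidablePred Pred] :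
    ((Finset.Icc 1 (q * N)).filter Pred).card
      = ∑ r' ∈ Finset.Icc 1 N, ((Finset.range q).filter (fun t => Pred (r' + t * N))).card := by
  have hprod : ∑ r' ∈ Finset.Icc 1 N, ((Finset.range q).filter (fun t => Pred (r' + t * N))).card
      = ((Finset.Icc 1 N ×ˢ Finset.range q).filter (fun x => Pred (x.1 + x.2 * N))).card := by
    rw [Finset.card_filter, Finset.sum_product]
    exact Finset.sum_congr rfl (fun r' _ => Finset.card_filter _ _)
  rw [hprod]
  apply Finset.card_nbij' (i := fun r => ((r - 1) % N + 1, (r - 1) / N))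
    (j := fun x => x.1 + x.2 * N)
  · intro r hr
    simp only [Finset.mem_coe, Finset.mem_filter, Finset.mem_Icc] at hr
    obtain ⟨⟨hr1, hr2⟩, hP⟩ := hr
    have hrec : (r - 1) % N + 1 + (r - 1) / N * N = r := by
      rw [add_right_comm, mul_comm, Nat.mod_add_div, Nat.sub_add_cancel hr1]
    simp only [Finset.mem_coe, Finset.mem_filter, Finset.mem_product, Finset.mem_Icc, Finset.mem_range]
    refine ⟨⟨⟨by omega, Nat.succ_le_of_lt (Nat.mod_lt _ hNpos)⟩, ?_⟩, ?_⟩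
    · exact (Nat.div_lt_iff_lt_mul hNpos).mpr (lt_of_lt_of_le (Nat.sub_lt hr1 one_pos) hr2)
    · rw [hrec]; exact hP
  · intro x hx
    simp only [Finset.mem_coe, Finset.mem_filter, Finset.mem_product, Finset.mem_Icc, Finset.mem_range] at hx ⊢
    obtain ⟨⟨⟨h1, h2⟩, h3⟩, hP⟩ := hx
    refine ⟨⟨by omega, ?_⟩, hP⟩
    calc x.1 + x.2 * N ≤ N + x.2 * N := Nat.add_le_add_right h2 _
      _ = (x.2 + 1) * N := by ring
      _ ≤ q * N := Nat.mul_le_mul_right N (by omega)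
  · intro r hr
    simp only [Finset.mem_coe, Finset.mem_filter, Finset.mem_Icc] at hr
    obtain ⟨⟨hr1, hr2⟩, hP⟩ := hr
    simp only
    rw [add_right_comm, mul_comm, Nat.mod_add_div, Nat.sub_add_cancel hr1]
  · intro x hx
    obtain ⟨a, b⟩ := x
    simp only [Finset.mem_coe, Finset.mem_filter, Finset.mem_product, Finset.mem_Icc, Finset.mem_range] at hx
    obtain ⟨⟨⟨h1, h2⟩, h3⟩, hP⟩ := hx
    have hs : a + b * N - 1 = a - 1 + b * N := Nat.sub_add_comm h1
    have hlt : a - 1 < N := by omega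
    simp only
    rw [hs, Nat.add_mul_mod_self_right, Nat.add_mul_div_right _ _ hNpos,
      Nat.mod_eq_of_lt hlt, Nat.div_eq_of_lt hlt, Prod.mk.injEq]
    constructor
    · omega
    · omega

lemma inner_count {q N g j : ℕ} (hq : q.Prime) (hNpos : 0 < N) (hN2 : 2 ∣ N) (hqN : ¬ q ∣ N)
    (hg : 0 < g) (hg2q : g < 2 * q) (hqodd : q % 2 = 1) (hj : 1 ≤ j) (r' : ℕ) :
    ((Finset.range q).filter (fun t => Nat.Coprime (r' + t * N) (q * N)
        ∧ Nat.Coprime (r' + t * N + g) (q * N) ∧ icard (q * N) (r' + t * N) g + 1 = j)).card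
    = (if Nat.Coprime r' N ∧ Nat.Coprime (r' + g) N ∧ icard N r' g + 1 = j
        then q - (j + 1) else 0)
      + (if Nat.Coprime r' N ∧ Nat.Coprime (r' + g) N ∧ icard N r' g + 1 = j + 1
        then j else 0) := by
  haveI := Fact.mk hq
  haveI : NeZero q := ⟨hq.pos.ne'⟩
  have hcopqN : ∀ x : ℕ, Nat.Coprime x (q * N) ↔ (¬ q ∣ x ∧ Nat.Coprime x N) := by
    intro x
    have h1 : Nat.Coprime x q ↔ ¬ q ∣ x := by
      rw [Nat.coprime_comm]
      exact hq.coprime_iff_not_dvd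
    rw [Nat.coprime_mul_iff_right, h1]
  have hNz : (N : ZMod q) ≠ 0 := by
    rw [Ne, ZMod.natCast_eq_zero_iff]
    exact hqN
  set φ : ℕ → ZMod q := fun s => -(s : ZMod q) * (N : ZMod q)⁻¹ with hφ
  have hdvd_iff : ∀ s t : ℕ, q ∣ (s + t * N) ↔ ((t : ZMod q) = φ s) := by
    intro s t
    rw [← ZMod.natCast_eq_zero_iff, hφ]
    push_cast
    rw [eq_mul_inv_iff_mul_eq₀ hNz]
    constructor
    · intro h
      linear_combination h
    · intro h
      linear_combination h
  have hcast_inj : ∀ x y : ℕ, x % 2 = 1 → y % 2 = 1 → x ≤ y → y - x ≤ g →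
      ((x : ZMod q) = (y : ZMod q)) → x = y := by
    intro x y hx hy hxy hle hc
    rw [ZMod.natCast_eq_natCast_iff, Nat.modEq_iff_dvd' hxy] at hc
    obtain ⟨k, hk⟩ := hc
    match k with
    | 0 => omega
    | 1 => omega
    | (k + 2) =>
      have h2 : 2 * q ≤ q * (k + 2) := by
        calc 2 * q = q * 2 := by ring
          _ ≤ q * (k + 2) := Nat.mul_le_mul_left q (by omega)
      have : y - x < y - x := by
        calc y - x ≤ g := hle
          _ < 2 * q := hg2q
          _ ≤ q * (k + 2) := h2
          _ = y - x := hk.symm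
      exact absurd this (lt_irrefl _)
  -- translation of the interior count
  have htrans : ∀ t : ℕ, icard (q * N) (r' + t * N) g
      = ((Finset.Ioo r' (r' + g)).filter
          (fun x => Nat.Coprime x N ∧ ¬ q ∣ (x + t * N))).card := by
    intro t
    unfold icard
    symm
    apply Finset.card_nbij' (i := fun x => x + t * N) (j := fun x => x - t * N)
    · intro x hx
      simp only [Finset.mem_coe, Finset.mem_filter, Finset.mem_Ioo] at hx ⊢
      obtain ⟨⟨h1, h2⟩, h3, h4⟩ := hx
      refine ⟨⟨Nat.add_lt_add_right h1 _, ?_⟩, ?_⟩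
      · rw [add_right_comm]
        exact Nat.add_lt_add_right h2 _
      · exact (hcopqN _).mpr ⟨h4, (Nat.coprime_add_mul_right_left x N t).mpr h3⟩
    · intro y hy
      simp only [Finset.mem_coe, Finset.mem_filter, Finset.mem_Ioo] at hy ⊢
      obtain ⟨⟨h1, h2⟩, h3⟩ := hy
      have hty : t * N ≤ y := le_of_lt (lt_of_le_of_lt (Nat.le_add_left (t * N) r') h1)
      have hy2 : y - t * N + t * N = y := Nat.sub_add_cancel hty
      obtain ⟨hqd, hcN⟩ := (hcopqN y).mp h3
      refine ⟨⟨?_, ?_⟩, ?_, ?_⟩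
      · have := h1
        rw [← hy2] at this
        exact lt_of_add_lt_add_right this
      · have := h2
        rw [add_right_comm, ← hy2] at this
        exact lt_of_add_lt_add_right this
      · rw [← hy2] at hcN
        exact (Nat.coprime_add_mul_right_left _ N t).mp hcN
      · rw [hy2]
        exact hqd
    · intro x _
      simp
    · intro y hy
      simp only [Finset.mem_coe, Finset.mem_filter, Finset.mem_Ioo] at hy
      have hty : t * N ≤ y := le_of_lt (lt_of_le_of_lt (Nat.le_add_left (t * N) r') hy.1.1)
      exact Nat.sub_add_cancel hty
  have hend1 : ∀ t : ℕ, Nat.Coprime (r' + t * N) (q * N)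
      ↔ (¬ q ∣ (r' + t * N) ∧ Nat.Coprime r' N) := by
    intro t
    rw [hcopqN, Nat.coprime_add_mul_right_left]
  have hend2 : ∀ t : ℕ, Nat.Coprime (r' + t * N + g) (q * N)
      ↔ (¬ q ∣ ((r' + g) + t * N) ∧ Nat.Coprime (r' + g) N) := by
    intro t
    rw [show r' + t * N + g = (r' + g) + t * N from by ring, hcopqN,
      Nat.coprime_add_mul_right_left]
  by_cases hcop1 : Nat.Coprime r' N
  swap
  · rw [if_neg (fun h => hcop1 h.1), if_neg (fun h => hcop1 h.1)]
    rw [Finset.card_eq_zero, Finset.filter_eq_empty_iff]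
    intro t _
    rw [hend1]
    intro h
    exact hcop1 h.1.2
  by_cases hcop2 : Nat.Coprime (r' + g) N
  swap
  · rw [if_neg (fun h => hcop2 h.2.1), if_neg (fun h => hcop2 h.2.1)]
    rw [Finset.card_eq_zero, Finset.filter_eq_empty_iff]
    intro t _
    rw [hend2]
    intro h
    exact hcop2 h.2.1.2
  set interior := (Finset.Ioo r' (r' + g)).filter (fun x => Nat.Coprime x N) with hint
  set K := interior.card with hK
  have hKic : icard N r' g = K := by
    rw [hK, hint]
    rfl
  set pts := (Finset.Icc r' (r' + g)).filter (fun x => Nat.Coprime x N) with hpts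
  have hsub : interior ⊆ pts := by
    intro x hx
    rw [hint, Finset.mem_filter, Finset.mem_Ioo] at hx
    rw [hpts, Finset.mem_filter, Finset.mem_Icc]
    exact ⟨⟨by omega, by omega⟩, hx.2⟩
  have hptsdec : pts = insert r' (insert (r' + g) interior) := by
    rw [hpts, hint]
    ext x
    simp only [Finset.mem_filter, Finset.mem_Icc, Finset.mem_insert, Finset.mem_Ioo]
    constructor
    · rintro ⟨⟨h1, h2⟩, h3⟩
      by_cases hx1 : x = r'
      · exact Or.inl hx1
      · by_cases hx2 : x = r' + g
        · exact Or.inr (Or.inl hx2)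
        · exact Or.inr (Or.inr ⟨⟨by omega, by omega⟩, h3⟩)
    · rintro (rfl | rfl | ⟨⟨h1, h2⟩, h3⟩)
      · exact ⟨⟨le_rfl, by omega⟩, hcop1⟩
      · exact ⟨⟨by omega, le_rfl⟩, hcop2⟩
      · exact ⟨⟨by omega, by omega⟩, h3⟩
  have hr'int : r' ∉ interior := by
    rw [hint]
    simp only [Finset.mem_filter, Finset.mem_Ioo]
    intro h
    exact absurd h.1.1 (lt_irrefl r')
  have hrgint : r' + g ∉ interior := by
    rw [hint]
    simp only [Finset.mem_filter, Finset.mem_Ioo]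
    intro h
    exact absurd h.1.2 (lt_irrefl _)
  have hcard_pts : pts.card = K + 2 := by
    have h1 : r' ∉ insert (r' + g) interior := by
      simp only [Finset.mem_insert]
      rintro (h | h)
      · omega
      · exact hr'int h
    rw [hptsdec, Finset.card_insert_of_notMem h1, Finset.card_insert_of_notMem hrgint]
  have hoddpts : ∀ x ∈ pts, x % 2 = 1 := fun x hx =>
    odd_of_coprime_even hN2 (Finset.mem_filter.mp hx).2
  have hinj : ∀ x ∈ pts, ∀ y ∈ pts, ((x : ZMod q) = (y : ZMod q)) → x = y := by
    intro x hx y hy hxy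
    have hxI := (Finset.mem_filter.mp hx).1
    have hyI := (Finset.mem_filter.mp hy).1
    rw [Finset.mem_Icc] at hxI hyI
    rcases le_total x y with h | h
    · exact hcast_inj x y (hoddpts x hx) (hoddpts y hy) h (by omega) hxy
    · exact (hcast_inj y x (hoddpts y hy) (hoddpts x hx) h (by omega) hxy.symm).symm
  have hφinj : ∀ x ∈ pts, ∀ y ∈ pts, φ x = φ y → x = y := by
    intro x hx y hy hxy
    rw [hφ] at hxy
    simp only at hxy
    have h2 := mul_right_cancel₀ (inv_ne_zero hNz) hxy
    exact hinj x hx y hy (neg_inj.mp h2)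
  have huniq : ∀ t : ℕ, ∀ x ∈ pts, ∀ y ∈ pts, q ∣ (x + t * N) → q ∣ (y + t * N) → x = y := by
    intro t x hx y hy h1 h2
    rw [hdvd_iff] at h1 h2
    exact hφinj x hx y hy (h1.symm.trans h2)
  have hmt : ∀ t : ℕ, icard (q * N) (r' + t * N) g
      = (interior.filter (fun x => ¬ q ∣ (x + t * N))).card := by
    intro t
    rw [htrans t, hint, Finset.filter_filter]
  have hmem_r' : r' ∈ pts := by
    rw [hptsdec]
    exact Finset.mem_insert_self _ _
  have hmem_rg : r' + g ∈ pts := by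
    rw [hptsdec]
    exact Finset.mem_insert_of_mem (Finset.mem_insert_self _ _)
  by_cases hjK : j = K + 1
  · -- length preserved: no point divisible
    have hiff : ∀ t ∈ Finset.range q,
        ((Nat.Coprime (r' + t * N) (q * N) ∧ Nat.Coprime (r' + t * N + g) (q * N)
          ∧ icard (q * N) (r' + t * N) g + 1 = j)
        ↔ ((t : ZMod q) ∈ (pts.image φ)ᶜ)) := by
      intro t _
      rw [Finset.mem_compl, Finset.mem_image]
      constructor
      · rintro ⟨h1, h2, h3⟩ ⟨s, hs, hφs⟩
        have hdvds : q ∣ s + t * N := (hdvd_iff s t).mpr hφs.symm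
        rw [hend1 t] at h1
        rw [hend2 t] at h2
        rw [hptsdec, Finset.mem_insert, Finset.mem_insert] at hs
        rcases hs with rfl | rfl | hsint
        · exact h1.1 hdvds
        · exact h2.1 hdvds
        · have hss : interior.filter (fun x => ¬ q ∣ (x + t * N)) ⊂ interior := by
            rw [Finset.ssubset_iff_of_subset (Finset.filter_subset _ _)]
            exact ⟨s, hsint, fun hmem => (Finset.mem_filter.mp hmem).2 hdvds⟩
          have := Finset.card_lt_card hss
          rw [hmt t] at h3
          omega
      · intro hnot
        have hnone : ∀ s ∈ pts, ¬ q ∣ (s + t * N) :=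
          fun s hs hd => hnot ⟨s, hs, ((hdvd_iff s t).mp hd).symm⟩
        refine ⟨(hend1 t).mpr ⟨hnone r' hmem_r', hcop1⟩,
          (hend2 t).mpr ⟨hnone (r' + g) hmem_rg, hcop2⟩, ?_⟩
        rw [hmt t, Finset.filter_true_of_mem (fun x hx => hnone x (hsub hx))]
        omega
    rw [Finset.filter_congr hiff, card_range_filter_cast hq.pos, Finset.card_compl,
      Finset.card_image_of_injOn (fun x hx y hy => hφinj x hx y hy), hcard_pts, ZMod.card]
    rw [if_pos ⟨hcop1, hcop2, by omega⟩, if_neg (fun h => by omega)]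
    omega
  · by_cases hjK2 : j = K
    · -- one interior point removed
      have hK1 : 1 ≤ K := by omega
      have hiff : ∀ t ∈ Finset.range q,
          ((Nat.Coprime (r' + t * N) (q * N) ∧ Nat.Coprime (r' + t * N + g) (q * N)
            ∧ icard (q * N) (r' + t * N) g + 1 = j)
          ↔ ((t : ZMod q) ∈ interior.image φ)) := by
        intro t _
        rw [Finset.mem_image]
        constructor
        · rintro ⟨h1, h2, h3⟩
          by_contra hnot
          have hnone : ∀ s ∈ interior, ¬ q ∣ (s + t * N) :=
            fun s hs hd => hnot ⟨s, hs, ((hdvd_iff s t).mp hd).symm⟩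
          rw [hmt t, Finset.filter_true_of_mem hnone] at h3
          omega
        · rintro ⟨s, hsint, hφs⟩
          have hdvds : q ∣ s + t * N := (hdvd_iff s t).mpr hφs.symm
          have hne1 : ¬ q ∣ (r' + t * N) := by
            intro hd
            have := huniq t r' hmem_r' s (hsub hsint) hd hdvds
            exact hr'int (this ▸ hsint)
          have hne2 : ¬ q ∣ ((r' + g) + t * N) := by
            intro hd
            have := huniq t (r' + g) hmem_rg s (hsub hsint) hd hdvds
            exact hrgint (this ▸ hsint)
          refine ⟨(hend1 t).mpr ⟨hne1, hcop1⟩, (hend2 t).mpr ⟨hne2, hcop2⟩, ?_⟩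
          rw [hmt t]
          have herase : interior.filter (fun x => ¬ q ∣ (x + t * N)) = interior.erase s := by
            ext x
            rw [Finset.mem_filter, Finset.mem_erase]
            constructor
            · rintro ⟨hxi, hxnd⟩
              refine ⟨fun hxs => hxnd (hxs ▸ hdvds), hxi⟩
            · rintro ⟨hxs, hxi⟩
              refine ⟨hxi, fun hd => hxs (huniq t x (hsub hxi) s (hsub hsint) hd hdvds)⟩
          rw [herase, Finset.card_erase_of_mem hsint]
          omega
      rw [Finset.filter_congr hiff, card_range_filter_cast hq.pos,
        Finset.card_image_of_injOn (fun x hx y hy => hφinj x (hsub hx) y (hsub hy))]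
      rw [if_neg (fun h => by omega), if_pos ⟨hcop1, hcop2, by omega⟩]
      omega
    · -- impossible length: empty
      have hnone : ∀ t ∈ Finset.range q,
          ¬ (Nat.Coprime (r' + t * N) (q * N) ∧ Nat.Coprime (r' + t * N + g) (q * N)
            ∧ icard (q * N) (r' + t * N) g + 1 = j) := by
        rintro t _ ⟨h1, h2, h3⟩
        rw [hmt t] at h3
        have hle : (interior.filter (fun x => ¬ q ∣ (x + t * N))).card ≤ K :=
          Finset.card_le_card (Finset.filter_subset _ _)
        have hge : K ≤ (interior.filter (fun x => ¬ q ∣ (x + t * N))).card + 1 := by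
          have hdiff : (interior \ interior.filter (fun x => ¬ q ∣ (x + t * N))).card ≤ 1 := by
            rw [Finset.card_le_one]
            intro a ha b hb
            have ha' := Finset.mem_sdiff.mp ha
            have hb' := Finset.mem_sdiff.mp hb
            have hda : q ∣ (a + t * N) := by
              by_contra hda
              exact ha'.2 (Finset.mem_filter.mpr ⟨ha'.1, hda⟩)
            have hdb : q ∣ (b + t * N) := by
              by_contra hdb
              exact hb'.2 (Finset.mem_filter.mpr ⟨hb'.1, hdb⟩)
            exact huniq t a (hsub ha'.1) b (hsub hb'.1) hda hdb
          have := Finset.card_sdiff_of_subset (Finset.filter_subset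
            (fun x => ¬ q ∣ (x + t * N)) interior)
          omega
        omega
      rw [Finset.filter_false_of_mem hnone, Finset.card_empty,
        if_neg (fun h => by omega), if_neg (fun h => by omega)]

lemma key_count {q N g j : ℕ} (hq : q.Prime) (hNpos : 0 < N) (hN2 : 2 ∣ N) (hqN : ¬ q ∣ N)
    (hg : 0 < g) (hg2q : g < 2 * q) (hqodd : q % 2 = 1) (hj : 1 ≤ j) :
    ((Finset.Icc 1 (q * N)).filter (fun r => Nat.Coprime r (q * N)
        ∧ Nat.Coprime (r + g) (q * N) ∧ icard (q * N) r g + 1 = j)).card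
    = (q - (j + 1)) * ((Finset.Icc 1 N).filter (fun r => Nat.Coprime r N
        ∧ Nat.Coprime (r + g) N ∧ icard N r g + 1 = j)).card
      + j * ((Finset.Icc 1 N).filter (fun r => Nat.Coprime r N
        ∧ Nat.Coprime (r + g) N ∧ icard N r g + 1 = (j + 1))).card := by
  rw [card_filter_lift (q := q) hNpos (fun r => Nat.Coprime r (q * N)
    ∧ Nat.Coprime (r + g) (q * N) ∧ icard (q * N) r g + 1 = j)]
  rw [Finset.sum_congr rfl (fun r' _ => inner_count hq hNpos hN2 hqN hg hg2q hqodd hj r')]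
  rw [Finset.sum_add_distrib, ← Finset.sum_filter, ← Finset.sum_filter,
    Finset.sum_const, Finset.sum_const, smul_eq_mul, smul_eq_mul]
  ring

lemma nCount_recursion {p q g : ℕ} (hp : p.Prime) (hq : q.Prime) (hpq : p < q)
    (hmin : ∀ r, r.Prime → p < r → q ≤ r) (hg : 0 < g) (hg2q : g < 2 * q) (hq2 : 2 < q)
    (j : ℕ) (hj : 1 ≤ j) :
    nCount q g j = (q - (j + 1)) * nCount p g j + j * nCount p g (j + 1) := by
  have hqodd : q % 2 = 1 := (Nat.Prime.eq_two_or_odd hq).resolve_left (by omega)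
  rw [nCount_eq q g j hg, nCount_eq p g j hg, nCount_eq p g (j + 1) hg,
    primorial_next hq hpq hmin]
  exact key_count hq (primorial_pos p) (two_dvd_primorial hp.two_le)
    (not_dvd_primorial hq hpq) hg hg2q hqodd hj

lemma prev_prime_stuff {p0 p : ℕ} (hp0 : p0.Prime) (hp : p.Prime) (hlt : p0 < p) :
    ∃ p', p'.Prime ∧ p0 ≤ p' ∧ p' < p ∧ (∀ r, r.Prime → p' < r → p ≤ r) := by
  classical
  set S := (Finset.range p).filter Nat.Prime with hS
  have hp0S : p0 ∈ S := by
    rw [hS, Finset.mem_filter, Finset.mem_range]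
    exact ⟨hlt, hp0⟩
  have hSne : S.Nonempty := ⟨p0, hp0S⟩
  set p' := S.max' hSne with hp'
  have hp'S : p' ∈ S := S.max'_mem hSne
  rw [hS, Finset.mem_filter, Finset.mem_range] at hp'S
  refine ⟨p', hp'S.2, S.le_max' p0 hp0S, hp'S.1, ?_⟩
  intro r hr hpr
  by_contra h
  push_neg at h
  have : r ≤ p' := S.le_max' r (by
    rw [hS, Finset.mem_filter, Finset.mem_range]
    exact ⟨h, hr⟩)
  omega

lemma chain_induction (p0 : ℕ) (Pred : ℕ → Prop) (hp0 : p0.Prime) (base : Pred p0)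
    (step : ∀ p' p : ℕ, p'.Prime → p.Prime → p0 ≤ p' → p' < p →
      (∀ r, r.Prime → p' < r → p ≤ r) → Pred p' → Pred p) :
    ∀ p, p.Prime → p0 ≤ p → Pred p := by
  intro p
  induction p using Nat.strong_induction_on with
  | _ p IH =>
    intro hp hle
    rcases eq_or_lt_of_le hle with rfl | hlt
    · exact base
    · obtain ⟨p', hp'1, hp'2, hp'3, hp'4⟩ := prev_prime_stuff hp0 hp hlt
      exact step p' p hp'1 hp hp'2 hp'3 hp'4 (IH p' hp'3 hp'1 hp'2)

lemma Icc_bot_split {J : ℕ} (hJ : 1 ≤ J) (f : ℕ → ℝ) :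
    ∑ j ∈ Finset.Icc 1 J, f j = f 1 + ∑ j ∈ Finset.Icc 2 J, f j := by
  have h : Finset.Icc 1 J = insert 1 (Finset.Icc 2 J) := by
    ext x
    simp only [Finset.mem_Icc, Finset.mem_insert]
    omega
  rw [h, Finset.sum_insert (by simp)]

lemma shift_sum {J : ℕ} (hJ : 1 ≤ J) (h : ℕ → ℝ) (h1 : h 1 = 0) (htop : h (J + 1) = 0) :
    ∑ j ∈ Finset.Icc 1 J, h (j + 1) = ∑ j ∈ Finset.Icc 1 J, h j := by
  have e2 : ∑ j ∈ Finset.Icc 1 J, h (j + 1) = ∑ j ∈ Finset.Icc 2 (J + 1), h j := by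
    apply Finset.sum_nbij' (i := fun j => j + 1) (j := fun j => j - 1)
    · intro a ha
      simp only [Finset.mem_Icc] at ha ⊢
      omega
    · intro a ha
      simp only [Finset.mem_Icc] at ha ⊢
      omega
    · intro a ha
      simp only [Finset.mem_Icc] at ha
      omega
    · intro a ha
      simp only [Finset.mem_Icc] at ha
      omega
    · intro a _
      rfl
  have e3 : ∑ j ∈ Finset.Icc 1 (J + 1), h j = h 1 + ∑ j ∈ Finset.Icc 2 (J + 1), h j :=
    Icc_bot_split (by omega) h
  have e4 : ∑ j ∈ Finset.Icc 1 (J + 1), h j = (∑ j ∈ Finset.Icc 1 J, h j) + h (J + 1) :=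
    Finset.sum_Icc_succ_top (by omega) h
  rw [e2]
  rw [h1, htop] at *
  linarith

noncomputable def Sg (g p : ℕ) : ℝ := ∑ j ∈ Finset.Icc 1 (g / 2), (nCount p g j : ℝ)

noncomputable def Yg (g p : ℕ) : ℝ :=
  ∑ j ∈ Finset.Icc 1 (g / 2), ((j : ℝ) - 1) * (nCount p g j : ℝ)

noncomputable def Pg (p0 p : ℕ) : ℝ :=
  ∏ k ∈ (Finset.Ioc p0 p).filter Nat.Prime, (1 - ((k : ℝ) - 2)⁻¹)

lemma step_facts {g p0 q : ℕ} (hg : 0 < g) (heven : Even g) (hp0 : p0.Prime) (hq : q.Prime)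
    (hlt : p0 < q) (hmin : ∀ r : ℕ, r.Prime → p0 < r → q ≤ r) (hbig : g / 2 + 1 < q)
    {p' p : ℕ} (hp' : p'.Prime) (hp : p.Prime) (hle : p0 ≤ p') (hlt2 : p' < p)
    (hnext : ∀ r : ℕ, r.Prime → p' < r → p ≤ r) :
    (nCount p 2 1 : ℝ) = ((p : ℝ) - 2) * (nCount p' 2 1 : ℝ)
    ∧ Sg g p = ((p : ℝ) - 2) * Sg g p'
    ∧ Yg g p = ((p : ℝ) - 3) * Yg g p'
    ∧ (nCount p g 1 : ℝ)
        = ((p : ℝ) - 2) * (nCount p' g 1 : ℝ) + (nCount p' g 2 : ℝ) := by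
  obtain ⟨m, hm⟩ := heven
  have hqp : q ≤ p := hmin p hp (by omega)
  have hq3 : 2 < q := by omega
  have hp3 : 2 < p := lt_of_lt_of_le hq3 hqp
  have hbigp : g / 2 + 1 < p := lt_of_lt_of_le hbig hqp
  have hg2p : g < 2 * p := by omega
  have hJ1 : 1 ≤ g / 2 := by omega
  have hrec : ∀ j, 1 ≤ j →
      nCount p g j = (p - (j + 1)) * nCount p' g j + j * nCount p' g (j + 1) :=
    fun j hj => nCount_recursion hp' hp hlt2 hnext hg hg2p hp3 j hj
  have htopz : nCount p' g (g / 2 + 1) = 0 :=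
    nCount_eq_zero p' g (g / 2 + 1) hp'.two_le hg ⟨m, hm⟩ le_rfl
  have h21 : (nCount p 2 1 : ℝ) = ((p : ℝ) - 2) * (nCount p' 2 1 : ℝ) := by
    have h2 := nCount_recursion (g := 2) hp' hp hlt2 hnext (by norm_num) (by omega) hp3 1 le_rfl
    rw [nCount_eq_zero p' 2 2 hp'.two_le (by norm_num) ⟨1, rfl⟩ (by norm_num),
      mul_zero, add_zero] at h2
    rw [h2]
    rw [Nat.cast_mul, Nat.cast_sub (by omega)]
    norm_num
  have hrecR : ∀ j ∈ Finset.Icc 1 (g / 2), (nCount p g j : ℝ)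
      = ((p : ℝ) - (j : ℝ) - 1) * (nCount p' g j : ℝ)
        + (j : ℝ) * (nCount p' g (j + 1) : ℝ) := by
    intro j hjm
    rw [Finset.mem_Icc] at hjm
    have hc : ((p - (j + 1) : ℕ) : ℝ) = (p : ℝ) - (j : ℝ) - 1 := by
      rw [Nat.cast_sub (by omega)]
      push_cast
      ring
    rw [hrec j hjm.1, Nat.cast_add, Nat.cast_mul, Nat.cast_mul, hc]
  have hx1 : (nCount p g 1 : ℝ)
      = ((p : ℝ) - 2) * (nCount p' g 1 : ℝ) + (nCount p' g 2 : ℝ) := by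
    have h2' : nCount p' g (1 + 1) = nCount p' g 2 := by norm_num
    have := hrecR 1 (by simp [hJ1])
    rw [h2'] at this
    rw [this]
    push_cast
    ring
  have hS : Sg g p = ((p : ℝ) - 2) * Sg g p' := by
    unfold Sg
    rw [Finset.sum_congr rfl hrecR, Finset.sum_add_distrib]
    have hshift : ∑ j ∈ Finset.Icc 1 (g / 2), (j : ℝ) * (nCount p' g (j + 1) : ℝ)
        = ∑ j ∈ Finset.Icc 1 (g / 2), ((j : ℝ) - 1) * (nCount p' g j : ℝ) := by
      have := shift_sum hJ1 (fun j => ((j : ℝ) - 1) * (nCount p' g j : ℝ))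
        (by norm_num) (by simp [htopz])
      rw [← this]
      apply Finset.sum_congr rfl
      intro j _
      push_cast
      ring
    rw [hshift, Finset.mul_sum, ← Finset.sum_add_distrib]
    apply Finset.sum_congr rfl
    intro j _
    ring
  have hY : Yg g p = ((p : ℝ) - 3) * Yg g p' := by
    unfold Yg
    have e1 : ∀ j ∈ Finset.Icc 1 (g / 2), ((j : ℝ) - 1) * (nCount p g j : ℝ)
        = ((j : ℝ) - 1) * (((p : ℝ) - (j : ℝ) - 1) * (nCount p' g j : ℝ))
          + ((j : ℝ) - 1) * ((j : ℝ) * (nCount p' g (j + 1) : ℝ)) := by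
      intro j hjm
      rw [hrecR j hjm]
      ring
    rw [Finset.sum_congr rfl e1, Finset.sum_add_distrib]
    have hshift : ∑ j ∈ Finset.Icc 1 (g / 2),
          ((j : ℝ) - 1) * ((j : ℝ) * (nCount p' g (j + 1) : ℝ))
        = ∑ j ∈ Finset.Icc 1 (g / 2),
          ((j : ℝ) - 2) * (((j : ℝ) - 1) * (nCount p' g j : ℝ)) := by
      have := shift_sum hJ1
        (fun j => ((j : ℝ) - 2) * (((j : ℝ) - 1) * (nCount p' g j : ℝ)))
        (by norm_num) (by simp [htopz])
      rw [← this]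
      apply Finset.sum_congr rfl
      intro j _
      push_cast
      ring
    rw [hshift, Finset.mul_sum, ← Finset.sum_add_distrib]
    apply Finset.sum_congr rfl
    intro j _
    ring
  exact ⟨h21, hS, hY, hx1⟩

lemma chain_facts {g p0 q : ℕ} (hg : 0 < g) (heven : Even g) (hp0 : p0.Prime) (hq : q.Prime)
    (hlt : p0 < q) (hmin : ∀ r : ℕ, r.Prime → p0 < r → q ≤ r) (hbig : g / 2 + 1 < q) :
    ∀ p, p.Prime → p0 ≤ p →
      (0 < nCount p 2 1
        ∧ Sg g p / (nCount p 2 1 : ℝ) = Sg g p0 / (nCount p0 2 1 : ℝ)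
        ∧ Yg g p / (nCount p 2 1 : ℝ) = (Yg g p0 / (nCount p0 2 1 : ℝ)) * Pg p0 p) := by
  obtain ⟨m, hm⟩ := heven
  have hq3 : 2 < q := by omega
  apply chain_induction p0 (fun p => 0 < nCount p 2 1
    ∧ Sg g p / (nCount p 2 1 : ℝ) = Sg g p0 / (nCount p0 2 1 : ℝ)
    ∧ Yg g p / (nCount p 2 1 : ℝ) = (Yg g p0 / (nCount p0 2 1 : ℝ)) * Pg p0 p) hp0
  · refine ⟨n21_pos p0 hp0.two_le, rfl, ?_⟩
    have h1 : Pg p0 p0 = 1 := by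
      unfold Pg
      rw [Finset.Ioc_self, Finset.filter_empty, Finset.prod_empty]
    rw [h1, mul_one]
  · rintro p' p hp' hp hle hlt2 hnext ⟨ih1, ih2, ih3⟩
    obtain ⟨h21, hS, hY, -⟩ :=
      step_facts hg ⟨m, hm⟩ hp0 hq hlt hmin hbig hp' hp hle hlt2 hnext
    have hqp : q ≤ p := hmin p hp (by omega)
    have hp3 : 2 < p := lt_of_lt_of_le hq3 hqp
    have hp2R : (0 : ℝ) < (p : ℝ) - 2 := by
      have h2 : (2 : ℝ) < (p : ℝ) := by exact_mod_cast hp3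
      linarith
    have hn21' : (0 : ℝ) < (nCount p' 2 1 : ℝ) := by exact_mod_cast ih1
    have hn21p : (0 : ℝ) < (nCount p 2 1 : ℝ) := by
      rw [h21]
      exact mul_pos hp2R hn21'
    refine ⟨by exact_mod_cast hn21p, ?_, ?_⟩
    · rw [hS, h21, mul_div_mul_left _ _ (ne_of_gt hp2R), ih2]
    · have hPg : Pg p0 p = (1 - ((p : ℝ) - 2)⁻¹) * Pg p0 p' := by
        unfold Pg
        have hset : (Finset.Ioc p0 p).filter Nat.Prime
            = insert p ((Finset.Ioc p0 p').filter Nat.Prime) := by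
          ext k
          simp only [Finset.mem_filter, Finset.mem_Ioc, Finset.mem_insert]
          constructor
          · rintro ⟨⟨hk1, hk2⟩, hk3⟩
            rcases le_or_gt k p' with h | h
            · exact Or.inr ⟨⟨hk1, h⟩, hk3⟩
            · exact Or.inl (le_antisymm hk2 (hnext k hk3 h))
          · rintro (rfl | ⟨⟨hk1, hk2⟩, hk3⟩)
            · exact ⟨⟨by omega, le_rfl⟩, hp⟩
            · exact ⟨⟨hk1, by omega⟩, hk3⟩
        rw [hset, Finset.prod_insert (by
          simp only [Finset.mem_filter, Finset.mem_Ioc]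
          rintro ⟨⟨_, hk2⟩, _⟩
          omega)]
      have hfactor : (1 - ((p : ℝ) - 2)⁻¹) = ((p : ℝ) - 3) / ((p : ℝ) - 2) := by
        field_simp
        ring
      rw [hY, h21, hPg]
      calc ((p : ℝ) - 3) * Yg g p' / (((p : ℝ) - 2) * (nCount p' 2 1 : ℝ))
          = (((p : ℝ) - 3) / ((p : ℝ) - 2)) * (Yg g p' / (nCount p' 2 1 : ℝ)) := by
            rw [div_eq_mul_inv, div_eq_mul_inv, div_eq_mul_inv, mul_inv]
            ring
        _ = (1 - ((p : ℝ) - 2)⁻¹) * (Yg g p' / (nCount p' 2 1 : ℝ)) := by rw [hfactor]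
        _ = (1 - ((p : ℝ) - 2)⁻¹) * ((Yg g p0 / (nCount p0 2 1 : ℝ)) * Pg p0 p') := by
            rw [ih3]
        _ = Yg g p0 / (nCount p0 2 1 : ℝ) * ((1 - ((p : ℝ) - 2)⁻¹) * Pg p0 p') := by
            ring

lemma Pg_tendsto_zero {p0 : ℕ} (hp0 : p0.Prime) :
    Filter.Tendsto (fun p : ℕ => Pg p0 p) Filter.atTop (nhds 0) := by
  have hfac : ∀ p : ℕ, ∀ k ∈ (Finset.Ioc p0 p).filter Nat.Prime,
      (0 ≤ 1 - ((k : ℝ) - 2)⁻¹ ∧ 1 - ((k : ℝ) - 2)⁻¹ ≤ Real.exp (-((k : ℝ) - 2)⁻¹)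
        ∧ (k : ℝ)⁻¹ ≤ ((k : ℝ) - 2)⁻¹) := by
    intro p k hk
    simp only [Finset.mem_filter, Finset.mem_Ioc] at hk
    have hk3 : 3 ≤ k := by
      have h2 := hk.2.two_le
      have hp02 := hp0.two_le
      omega
    have h1 : (1 : ℝ) ≤ (k : ℝ) - 2 := by
      have h3 : (3 : ℝ) ≤ (k : ℝ) := by exact_mod_cast hk3
      linarith
    have hinv : ((k : ℝ) - 2)⁻¹ ≤ 1 := inv_le_one_of_one_le₀ h1
    refine ⟨by linarith, ?_, ?_⟩
    · have h4 := Real.add_one_le_exp (-((k : ℝ) - 2)⁻¹)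
      linarith
    · rw [inv_eq_one_div, inv_eq_one_div]
      apply one_div_le_one_div_of_le (by linarith)
      linarith
  have hPg01 : ∀ p : ℕ, 0 ≤ Pg p0 p
      ∧ Pg p0 p ≤ Real.exp (-∑ k ∈ (Finset.Ioc p0 p).filter Nat.Prime, ((k : ℝ) - 2)⁻¹) := by
    intro p
    constructor
    · exact Finset.prod_nonneg (fun k hk => (hfac p k hk).1)
    · unfold Pg
      rw [← Finset.sum_neg_distrib, Real.exp_sum]
      exact Finset.prod_le_prod (fun k hk => (hfac p k hk).1)
        (fun k hk => (hfac p k hk).2.1)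
  have hSP : Filter.Tendsto (fun n => ∑ k ∈ Finset.range n,
      Set.indicator {p : ℕ | p.Prime} (fun k : ℕ => 1 / (k : ℝ)) k)
      Filter.atTop Filter.atTop := by
    rw [← not_summable_iff_tendsto_nat_atTop_of_nonneg
      (fun n => Set.indicator_nonneg (fun k _ => by positivity) n)]
    exact not_summable_one_div_on_primes
  have hsumT : Filter.Tendsto
      (fun p : ℕ => ∑ k ∈ (Finset.Ioc p0 p).filter Nat.Prime, ((k : ℝ) - 2)⁻¹)
      Filter.atTop Filter.atTop := by
    have haux : Filter.Tendsto (fun n : ℕ => (∑ k ∈ Finset.range (n + 1),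
        Set.indicator {p : ℕ | p.Prime} (fun k : ℕ => 1 / (k : ℝ)) k)
        - ∑ k ∈ Finset.range (p0 + 1),
            Set.indicator {p : ℕ | p.Prime} (fun k : ℕ => 1 / (k : ℝ)) k)
        Filter.atTop Filter.atTop := by
      have h1 := Filter.tendsto_atTop_add_const_right Filter.atTop
        (-(∑ k ∈ Finset.range (p0 + 1),
          Set.indicator {p : ℕ | p.Prime} (fun k : ℕ => 1 / (k : ℝ)) k))
        (hSP.comp (Filter.tendsto_add_atTop_nat 1))
      simpa [sub_eq_add_neg] using h1
    apply Filter.tendsto_atTop_mono' Filter.atTop ?_ haux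
    filter_upwards [Filter.eventually_ge_atTop p0] with n hn
    rw [← Finset.sum_Ico_eq_sub _ (by omega)]
    have hIco : Finset.Ico (p0 + 1) (n + 1) = Finset.Ioc p0 n := by
      ext k
      simp only [Finset.mem_Ico, Finset.mem_Ioc]
      omega
    rw [hIco, ← Finset.sum_filter_add_sum_filter_not (Finset.Ioc p0 n) Nat.Prime]
    have hz : ∑ k ∈ (Finset.Ioc p0 n).filter (fun k => ¬ Nat.Prime k),
        Set.indicator {p : ℕ | p.Prime} (fun k : ℕ => 1 / (k : ℝ)) k = 0 :=
      Finset.sum_eq_zero (fun k hk => Set.indicator_of_notMem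
        (by simpa using (Finset.mem_filter.mp hk).2) _)
    rw [hz, add_zero]
    apply Finset.sum_le_sum
    intro k hk
    have hmem : Nat.Prime k := (Finset.mem_filter.mp hk).2
    rw [Set.indicator_of_mem (by simpa using hmem), one_div]
    exact (hfac n k hk).2.2
  have hnegT : Filter.Tendsto (fun p : ℕ =>
      -∑ k ∈ (Finset.Ioc p0 p).filter Nat.Prime, ((k : ℝ) - 2)⁻¹)
      Filter.atTop Filter.atBot :=
    Filter.tendsto_neg_atTop_atBot.comp hsumT
  have hexpT := Real.tendsto_exp_atBot.comp hnegT
  exact tendsto_of_tendsto_of_tendsto_of_le_of_le tendsto_const_nhds hexpT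
    (fun p => (hPg01 p).1) (fun p => (hPg01 p).2)

theorem ratio_tendsto_total_driving_terms (g : ℕ) (hg : 0 < g) (heven : Even g)
    (p0 q : ℕ) (hp0 : p0.Prime) (hq : q.Prime) (hlt : p0 < q)
    (hmin : ∀ r : ℕ, r.Prime → p0 < r → q ≤ r) (hbig : g / 2 + 1 < q) :
    Filter.Tendsto (fun p : ℕ => (nCount p g 1 : ℝ) / (nCount p 2 1 : ℝ))
      (Filter.atTop ⊓ Filter.principal {p : ℕ | p.Prime})
      (nhds ((∑ j ∈ Finset.Icc 1 (g / 2), (nCount p0 g j : ℝ)) / (nCount p0 2 1 : ℝ))) := by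
  obtain ⟨m, hm⟩ := heven
  have hJ1 : 1 ≤ g / 2 := by omega
  have hchain := chain_facts hg ⟨m, hm⟩ hp0 hq hlt hmin hbig
  have hsq : Filter.Tendsto (fun p : ℕ => (nCount p g 1 : ℝ) / (nCount p 2 1 : ℝ)
      - Sg g p0 / (nCount p0 2 1 : ℝ))
      (Filter.atTop ⊓ Filter.principal {p : ℕ | p.Prime}) (nhds 0) := by
    apply squeeze_zero_norm' (a := fun p : ℕ => Yg g p0 / (nCount p0 2 1 : ℝ) * Pg p0 p)
    · rw [Filter.eventually_inf_principal]
      filter_upwards [Filter.eventually_ge_atTop p0] with p hge hpr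
      obtain ⟨h1, h2, h3⟩ := hchain p hpr hge
      have hnpos : (0 : ℝ) < (nCount p 2 1 : ℝ) := by exact_mod_cast h1
      have hx1le : (nCount p g 1 : ℝ) ≤ Sg g p := by
        unfold Sg
        apply Finset.single_le_sum (f := fun j => (nCount p g j : ℝ))
          (fun j _ => Nat.cast_nonneg _)
        rw [Finset.mem_Icc]
        exact ⟨le_rfl, hJ1⟩
      have hdiff : Sg g p - (nCount p g 1 : ℝ) ≤ Yg g p := by
        unfold Sg Yg
        rw [Icc_bot_split hJ1 (fun j => (nCount p g j : ℝ)),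
          Icc_bot_split hJ1 (fun j => ((j : ℝ) - 1) * (nCount p g j : ℝ))]
        simp only [Nat.cast_one, sub_self, zero_mul, zero_add, add_sub_cancel_left]
        apply Finset.sum_le_sum
        intro j hj
        rw [Finset.mem_Icc] at hj
        have h2j : (2 : ℝ) ≤ (j : ℝ) := by exact_mod_cast hj.1
        have hc : (0 : ℝ) ≤ (nCount p g j : ℝ) := Nat.cast_nonneg _
        nlinarith
      have hLp : Sg g p0 / (nCount p0 2 1 : ℝ) = Sg g p / (nCount p 2 1 : ℝ) := h2.symm
      rw [Real.norm_eq_abs, hLp, abs_sub_comm,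
        abs_of_nonneg (sub_nonneg.mpr ((div_le_div_iff_of_pos_right hnpos).mpr hx1le))]
      rw [← h3, div_sub_div_same]
      exact (div_le_div_iff_of_pos_right hnpos).mpr hdiff
    · have h4 := (Pg_tendsto_zero hp0).const_mul (Yg g p0 / (nCount p0 2 1 : ℝ))
      rw [mul_zero] at h4
      exact h4.mono_left inf_le_left
  have hfin := hsq.add_const (Sg g p0 / (nCount p0 2 1 : ℝ))
  rw [zero_add] at hfin
  have heq : (fun p : ℕ => (nCount p g 1 : ℝ) / (nCount p 2 1 : ℝ)
      - Sg g p0 / (nCount p0 2 1 : ℝ) + Sg g p0 / (nCount p0 2 1 : ℝ))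
      = fun p : ℕ => (nCount p g 1 : ℝ) / (nCount p 2 1 : ℝ) := by
    funext p
    ring
  rw [heq] at hfin
  exact hfin
end

section
/- For each g in {6, 12, 18, 24}, the ratio N_p(g)/N_p(2) of the number of gaps equal to g in the cycle of gaps 𝒢(p#) to the number of gaps equal to 2 in 𝒢(p#) converges to 2 as p → ∞ through the primes. -/
open Finset

lemma prod_isUnit_iff {M N : Type*} [CommMonoid M] [CommMonoid N] {a : M} {b : N} :
    IsUnit (a, b) ↔ IsUnit a ∧ IsUnit b := by
  constructor
  · intro h
    exact ⟨h.map (MonoidHom.fst M N), h.map (MonoidHom.snd M N)⟩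
  · rintro ⟨ha, hb⟩
    rw [isUnit_iff_exists_inv] at *
    obtain ⟨a', ha'⟩ := ha
    obtain ⟨b', hb'⟩ := hb
    exact ⟨(a', b'), Prod.ext ha' hb'⟩

noncomputable def cnt (T : Finset ℕ) (n : ℕ) : ℕ :=
  Nat.card {x : ZMod n // ∀ t ∈ T, IsUnit (x + (t : ZMod n))}

lemma cnt_one (T : Finset ℕ) : cnt T 1 = 1 := by
  have h : ∀ x : ZMod 1, ∀ t ∈ T, IsUnit (x + (t : ZMod 1)) :=
    fun x t _ => isUnit_of_subsingleton _
  rw [cnt, Nat.card_congr (Equiv.subtypeUnivEquiv h)]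
  simp [Nat.card_eq_fintype_card]

lemma cnt_mul (T : Finset ℕ) {m n : ℕ} (h : m.Coprime n) :
    cnt T (m * n) = cnt T m * cnt T n := by
  have e := ZMod.chineseRemainder h
  have key : ∀ x : ZMod (m * n), (∀ t ∈ T, IsUnit (x + (t : ZMod (m*n)))) ↔
      ((∀ t ∈ T, IsUnit ((e x).1 + (t : ZMod m))) ∧ (∀ t ∈ T, IsUnit ((e x).2 + (t : ZMod n)))) := by
    intro x
    rw [← forall₂_and]
    refine forall₂_congr fun t ht => ?_
    have : IsUnit (x + (t : ZMod (m*n))) ↔ IsUnit (e (x + (t : ZMod (m*n)))) := by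
      constructor
      · intro h'; exact h'.map e.toRingHom
      · intro h'
        have := h'.map e.symm.toRingHom
        simpa using this
    rw [this, map_add, map_natCast]
    exact prod_isUnit_iff
  calc cnt T (m * n)
      = Nat.card {y : ZMod m × ZMod n //
          (∀ t ∈ T, IsUnit (y.1 + (t : ZMod m))) ∧ (∀ t ∈ T, IsUnit (y.2 + (t : ZMod n)))} := by
        refine Nat.card_congr (e.toEquiv.subtypeEquiv fun x => ?_)
        exact key x
    _ = cnt T m * cnt T n := by
        rw [cnt, cnt, ← Nat.card_prod]
        exact Nat.card_congr (Equiv.subtypeProdEquivProd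
          (p := fun a : ZMod m => ∀ t ∈ T, IsUnit (a + (t : ZMod m)))
          (q := fun b : ZMod n => ∀ t ∈ T, IsUnit (b + (t : ZMod n))))

lemma cnt_prime (T : Finset ℕ) {q : ℕ} (hq : q.Prime) :
    cnt T q = q - (T.image (fun t : ℕ => (t : ZMod q))).card := by
  haveI : Fact q.Prime := ⟨hq⟩
  haveI : NeZero q := ⟨hq.pos.ne'⟩
  classical
  rw [cnt, Nat.card_eq_fintype_card, Fintype.card_subtype]
  have hpred : ∀ x : ZMod q, (∀ t ∈ T, IsUnit (x + (t : ZMod q))) ↔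
      x ∉ T.image (fun t : ℕ => -(t : ZMod q)) := by
    intro x
    simp only [mem_image, not_exists]
    constructor
    · rintro h t ⟨ht, rfl⟩
      have := h t ht
      simp [isUnit_iff_ne_zero] at this
    · intro h t ht
      rw [isUnit_iff_ne_zero]
      intro hx
      exact h t ⟨ht, by linear_combination -hx⟩
  have : (Finset.univ.filter fun x : ZMod q => ∀ t ∈ T, IsUnit (x + (t : ZMod q))) =
      Finset.univ \ T.image (fun t : ℕ => -(t : ZMod q)) := by
    ext x
    simp only [mem_filter, mem_univ, true_and, mem_sdiff, hpred]
  rw [this, card_sdiff_of_subset (subset_univ _), card_univ, ZMod.card]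
  congr 1
  have : (fun t : ℕ => -(t : ZMod q)) = (fun y : ZMod q => -y) ∘ (fun t : ℕ => (t : ZMod q)) := rfl
  rw [this, ← Finset.image_image, Finset.card_image_of_injective _ neg_injective]

lemma cnt_prod (T : Finset ℕ) (s : Finset ℕ) (hs : ∀ q ∈ s, q.Prime) :
    cnt T (∏ q ∈ s, q) = ∏ q ∈ s, cnt T q := by
  classical
  induction s using Finset.induction_on with
  | empty => simpa using cnt_one T
  | @insert a s' ha ih =>
    rw [Finset.prod_insert ha, Finset.prod_insert ha, cnt_mul, ih (fun q hq' => hs q (mem_insert_of_mem hq'))]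
    refine Nat.Coprime.prod_right fun q hq' => ?_
    exact (Nat.coprime_primes (hs a (mem_insert_self a s')) (hs q (mem_insert_of_mem hq'))).mpr
      (fun h => ha (h ▸ hq'))

lemma card_Icc_filter (T : Finset ℕ) {P : ℕ} (hP : 0 < P)
    [DecidablePred fun r => ∀ t ∈ T, Nat.Coprime (r + t) P] :
    ((Finset.Icc 1 P).filter (fun r => ∀ t ∈ T, Nat.Coprime (r + t) P)).card = cnt T P := by
  haveI : NeZero P := ⟨hP.ne'⟩
  letI : DecidablePred (fun x : ZMod P => ∀ t ∈ T, IsUnit (x + (t : ZMod P))) :=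
    fun _ => Classical.propDecidable _
  rw [cnt, Nat.card_eq_fintype_card, Fintype.card_subtype]
  refine Finset.card_bij (fun r _ => (r : ZMod P)) ?_ ?_ ?_
  · intro r hr
    rw [mem_filter] at hr
    rw [mem_filter]
    refine ⟨mem_univ _, fun t ht => ?_⟩
    rw [← Nat.cast_add, ZMod.isUnit_iff_coprime]
    exact hr.2 t ht
  · intro r hr r' hr' hrr
    rw [mem_filter, mem_Icc] at hr hr'
    have := (ZMod.natCast_eq_natCast_iff r r' P).mp hrr
    rcases le_total r r' with h | h
    · have hd := (Nat.modEq_iff_dvd' h).mp this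
      have := Nat.eq_zero_of_dvd_of_lt hd
      omega
    · have hd := (Nat.modEq_iff_dvd' h).mp this.symm
      have := Nat.eq_zero_of_dvd_of_lt hd
      omega
  · intro x hx
    rw [mem_filter] at hx
    refine ⟨if x.val = 0 then P else x.val, ?_, ?_⟩
    · rw [mem_filter, mem_Icc]
      have hv := ZMod.val_lt x
      constructor
      · split <;> omega
      · intro t ht
        have : ((if x.val = 0 then P else x.val : ℕ) : ZMod P) = x := by
          split
          · rename_i h0
            rw [ZMod.natCast_self]
            exact ((ZMod.val_eq_zero x).mp h0).symm
          · rw [ZMod.natCast_val, ZMod.cast_id]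
        rw [← ZMod.isUnit_iff_coprime, Nat.cast_add, this]
        exact hx.2 t ht
    · show ((if x.val = 0 then P else x.val : ℕ) : ZMod P) = x
      split
      · rename_i h0
        rw [ZMod.natCast_self]
        exact ((ZMod.val_eq_zero x).mp h0).symm
      · rw [ZMod.natCast_val, ZMod.cast_id]

lemma primorial_eq_prod (n : ℕ) : primorial n = ∏ q ∈ (n + 1).primesBelow, q := rfl

lemma not_two_dvd_of_coprime {P x : ℕ} (h2 : 2 ∣ P) (h : Nat.Coprime x P) : ¬ 2 ∣ x := by
  intro h'
  have hd := Nat.dvd_gcd h' h2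
  rw [Nat.Coprime] at h
  rw [h] at hd
  omega

lemma pred2_iff {P r : ℕ} (h2 : 2 ∣ P) :
    (Nat.Coprime r P ∧ MatchesGaps P r [2]) ↔
      ∀ t ∈ ({0, 2} : Finset ℕ), Nat.Coprime (r + t) P := by
  show (Nat.Coprime r P ∧ (IsNextTot P r (r + 2) ∧ True)) ↔ _
  unfold IsNextTot
  constructor
  · rintro ⟨h0, ⟨⟨-, hc, -⟩, -⟩⟩ t ht
    simp only [mem_insert, mem_singleton] at ht
    rcases ht with rfl | rfl
    · simpa using h0
    · exact hc
  · intro h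
    have h0 := h 0 (by simp)
    have hg := h 2 (by simp)
    rw [add_zero] at h0
    refine ⟨h0, ⟨⟨by omega, hg, ?_⟩, trivial⟩⟩
    intro x hx1 hx2 hx
    have hor := not_two_dvd_of_coprime h2 h0
    have hox := not_two_dvd_of_coprime h2 hx
    omega

lemma Ncount_two_eq {p : ℕ} (hp : 2 ≤ p) : Ncount p [2] = cnt {0, 2} (primorial p) := by
  have h2 : (2 : ℕ) ∣ primorial p := by
    rw [primorial_eq_prod]
    exact Finset.dvd_prod_of_mem _ (Nat.mem_primesBelow.mpr ⟨by omega, Nat.prime_two⟩)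
  classical
  unfold Ncount
  have hset : ((Finset.Icc 1 (primorial p)).filter
        (fun r => Nat.Coprime r (primorial p) ∧ MatchesGaps (primorial p) r [2]))
      = (Finset.Icc 1 (primorial p)).filter
        (fun r => ∀ t ∈ ({0, 2} : Finset ℕ), Nat.Coprime (r + t) (primorial p)) := by
    ext r
    simp only [Finset.mem_filter]
    exact and_congr_right fun _ => pred2_iff h2
  rw [hset]
  exact card_Icc_filter {0, 2} (primorial_pos p)

lemma Ncount_g_le {p g : ℕ} (hg : 0 < g) : Ncount p [g] ≤ cnt {0, g} (primorial p) := by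
  classical
  rw [← card_Icc_filter {0, g} (P := primorial p) (primorial_pos p)]
  unfold Ncount
  apply Finset.card_le_card
  intro r hr
  rw [mem_filter] at hr ⊢
  obtain ⟨hmem, h0, hmatch⟩ := hr
  obtain ⟨⟨-, hc, -⟩, -⟩ : IsNextTot (primorial p) r (r + g) ∧ True := hmatch
  refine ⟨hmem, fun t ht => ?_⟩
  simp only [mem_insert, mem_singleton] at ht
  rcases ht with rfl | rfl
  · simpa using h0
  · exact hc

lemma cnt_le_Ncount_add {p g : ℕ} (hp : 2 ≤ p) (hg : 0 < g) :
    cnt {0, g} (primorial p) ≤ Ncount p [g] +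
      ∑ t ∈ (Finset.Ioo 0 g).filter (fun t => 2 ∣ t), cnt {0, t, g} (primorial p) := by
  classical
  have h2 : (2 : ℕ) ∣ primorial p := by
    rw [primorial_eq_prod]
    exact Finset.dvd_prod_of_mem _ (Nat.mem_primesBelow.mpr ⟨by omega, Nat.prime_two⟩)
  set P := primorial p with hP
  rw [← card_Icc_filter {0, g} (P := P) (primorial_pos p)]
  have hsum : ∀ t ∈ (Finset.Ioo 0 g).filter (fun t => 2 ∣ t),
      cnt {0, t, g} P = ((Finset.Icc 1 P).filter
        (fun r => ∀ u ∈ ({0, t, g} : Finset ℕ), Nat.Coprime (r + u) P)).card := by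
    intro t _
    exact (card_Icc_filter {0, t, g} (P := P) (primorial_pos p)).symm
  rw [Finset.sum_congr rfl hsum]
  unfold Ncount
  set N : Finset ℕ := (Finset.Icc 1 P).filter
      (fun r => Nat.Coprime r P ∧ MatchesGaps P r [g]) with hN
  set B : ℕ → Finset ℕ := fun t => (Finset.Icc 1 P).filter
      (fun r => ∀ u ∈ ({0, t, g} : Finset ℕ), Nat.Coprime (r + u) P) with hB
  have hsub : (Finset.Icc 1 P).filter (fun r => ∀ t ∈ ({0, g} : Finset ℕ), Nat.Coprime (r + t) P)
      ⊆ N ∪ ((Finset.Ioo 0 g).filter (fun t => 2 ∣ t)).biUnion B := by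
    intro r hr
    rw [mem_filter] at hr
    obtain ⟨hmem, hall⟩ := hr
    have h0 : Nat.Coprime r P := by simpa using hall 0 (by simp)
    have hgc : Nat.Coprime (r + g) P := hall g (by simp)
    rw [Finset.mem_union]
    by_cases hrN : r ∈ N
    · exact Or.inl hrN
    · right
      rw [hN, mem_filter] at hrN
      have hnm : ¬ MatchesGaps P r [g] := by tauto
      have hnext : ¬ IsNextTot P r (r + g) := fun h => hnm ⟨h, trivial⟩
      unfold IsNextTot at hnext
      push_neg at hnext
      obtain ⟨x, hx1, hx2, hx⟩ := hnext (by omega) hgc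
      have hor := not_two_dvd_of_coprime h2 h0
      have hox := not_two_dvd_of_coprime h2 hx
      rw [Finset.mem_biUnion]
      refine ⟨x - r, ?_, ?_⟩
      · rw [mem_filter, Finset.mem_Ioo]
        omega
      · rw [hB, mem_filter]
        refine ⟨hmem, fun u hu => ?_⟩
        simp only [mem_insert, mem_singleton] at hu
        rcases hu with rfl | rfl | rfl
        · simpa using h0
        · have : r + (x - r) = x := by omega
          rw [this]; exact hx
        · exact hgc
  calc ((Finset.Icc 1 P).filter
      (fun r => ∀ t ∈ ({0, g} : Finset ℕ), Nat.Coprime (r + t) P)).card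
      ≤ (N ∪ ((Finset.Ioo 0 g).filter (fun t => 2 ∣ t)).biUnion B).card :=
        Finset.card_le_card hsub
    _ ≤ N.card + (((Finset.Ioo 0 g).filter (fun t => 2 ∣ t)).biUnion B).card :=
        Finset.card_union_le _ _
    _ ≤ N.card + ∑ t ∈ (Finset.Ioo 0 g).filter (fun t => 2 ∣ t), (B t).card :=
        Nat.add_le_add_left (Finset.card_biUnion_le) _


lemma cnt_pair_eval {q : ℕ} (hq : q.Prime) (a : ℕ) :
    cnt {0, a} q = if q ∣ a then q - 1 else q - 2 := by
  classical
  rw [cnt_prime _ hq]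
  congr 1
  rw [Finset.image_insert, Finset.image_singleton, Nat.cast_zero]
  by_cases h : q ∣ a
  · rw [if_pos h]
    have : (a : ZMod q) = 0 := (ZMod.natCast_eq_zero_iff a q).mpr h
    rw [this]
    simp
  · rw [if_neg h]
    have : (a : ZMod q) ≠ 0 := fun hc => h ((ZMod.natCast_eq_zero_iff a q).mp hc)
    rw [Finset.card_insert_of_notMem (by simpa using this.symm), Finset.card_singleton]

lemma cnt_triple_eval {q t g : ℕ} (hq : q.Prime) (ht : 0 < t) (htg : t < g) (hgq : g < q) :
    cnt {0, t, g} q = q - 3 := by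
  classical
  rw [cnt_prime _ hq]
  congr 1
  haveI : NeZero q := ⟨hq.pos.ne'⟩
  rw [Finset.image_insert, Finset.image_insert, Finset.image_singleton, Nat.cast_zero]
  have hval : ∀ a : ℕ, a < q → ((a : ZMod q)).val = a := fun a ha => ZMod.val_cast_of_lt ha
  have h1 : (t : ZMod q) ≠ 0 := by
    intro h
    have := hval t (by omega)
    rw [h, ZMod.val_zero] at this
    omega
  have h2 : (g : ZMod q) ≠ 0 := by
    intro h
    have := hval g (by omega)
    rw [h, ZMod.val_zero] at this
    omega
  have h3 : (t : ZMod q) ≠ (g : ZMod q) := by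
    intro h
    have h1 := hval t (by omega)
    have h2 := hval g (by omega)
    rw [h, h2] at h1
    omega
  rw [Finset.card_insert_of_notMem (by
      simp only [Finset.mem_insert, Finset.mem_singleton]
      push_neg
      exact ⟨Ne.symm h1, Ne.symm h2⟩),
    Finset.card_insert_of_notMem (by simpa using h3), Finset.card_singleton]

lemma cnt_le_sub_one {q : ℕ} (hq : q.Prime) (T : Finset ℕ) (h0 : 0 ∈ T) :
    cnt T q ≤ q - 1 := by
  classical
  rw [cnt_prime _ hq]
  have : 0 < (T.image (fun t : ℕ => (t : ZMod q))).card :=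
    Finset.card_pos.mpr ⟨0, Finset.mem_image.mpr ⟨0, h0, Nat.cast_zero⟩⟩
  omega

lemma cnt_primorial (T : Finset ℕ) (p : ℕ) :
    cnt T (primorial p) = ∏ q ∈ (p + 1).primesBelow, cnt T q := by
  rw [primorial_eq_prod]
  exact cnt_prod T _ (fun q hq => Nat.prime_of_mem_primesBelow hq)

lemma cnt_two_pos (p : ℕ) : 0 < cnt {0, 2} (primorial p) := by
  rw [cnt_primorial]
  refine Finset.prod_pos fun q hq => ?_
  have hq2 := (Nat.prime_of_mem_primesBelow hq).two_le
  rw [cnt_pair_eval (Nat.prime_of_mem_primesBelow hq)]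
  split
  · omega
  · rename_i h
    have : q ≠ 2 := by rintro rfl; exact h dvd_rfl
    omega


lemma cnt_g_eq_two_mul {p g : ℕ} (hp : 3 ≤ p) (hg2 : 2 ∣ g) (hg3 : 3 ∣ g)
    (hfac : ∀ q, q.Prime → q ∣ g → q ≤ 3) :
    cnt {0, g} (primorial p) = 2 * cnt {0, 2} (primorial p) := by
  rw [cnt_primorial, cnt_primorial]
  have h3 : 3 ∈ (p + 1).primesBelow := Nat.mem_primesBelow.mpr ⟨by omega, Nat.prime_three⟩
  rw [← Finset.mul_prod_erase _ _ h3, ← Finset.mul_prod_erase _ _ h3]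
  have e3g : cnt {0, g} 3 = 2 := by rw [cnt_pair_eval Nat.prime_three, if_pos hg3]
  have e32 : cnt {0, 2} 3 = 1 := by
    rw [cnt_pair_eval Nat.prime_three, if_neg (by omega)]
  have hrest : ∏ q ∈ ((p + 1).primesBelow).erase 3, cnt {0, g} q
      = ∏ q ∈ ((p + 1).primesBelow).erase 3, cnt {0, 2} q := by
    refine Finset.prod_congr rfl fun q hq => ?_
    have hqp : q.Prime := Nat.prime_of_mem_primesBelow (Finset.mem_of_mem_erase hq)
    have hq3 : q ≠ 3 := Finset.ne_of_mem_erase hq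
    by_cases hq2 : q = 2
    · subst hq2
      rw [cnt_pair_eval hqp, if_pos hg2, cnt_pair_eval hqp, if_pos dvd_rfl]
    · have hq4 : q ≠ 4 := by rintro rfl; norm_num at hqp
      have h5 : 5 ≤ q := by have := hqp.two_le; omega
      rw [cnt_pair_eval hqp, if_neg, cnt_pair_eval hqp, if_neg]
      · exact fun h => absurd (Nat.le_of_dvd (by omega) h) (by omega)
      · exact fun h => absurd (hfac q hqp h) (by omega)
  rw [e3g, e32, hrest]
  ring

lemma cnt_two_prime_pos {q : ℕ} (hq : q.Prime) : 0 < cnt {0, 2} q := by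
  rw [cnt_pair_eval hq]
  have := hq.two_le
  split
  · omega
  · rename_i h
    have : q ≠ 2 := by rintro rfl; exact h dvd_rfl
    omega

lemma cnt_triple_le {p t g : ℕ} (hp : 25 ≤ p) (ht : 0 < t) (htg : t < g) (hg24 : g ≤ 24) :
    (cnt {0, t, g} (primorial p) : ℝ) ≤ (primorial 24 : ℝ) *
      (∏ q ∈ ((p + 1).primesBelow).filter (fun q => 24 < q),
        (((q : ℝ) - 3) / ((q : ℝ) - 2))) *
      (cnt {0, 2} (primorial p) : ℝ) := by
  classical
  set s := (p + 1).primesBelow with hs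
  have key : ∀ q ∈ s, (cnt {0, t, g} q : ℝ) ≤
      (if 24 < q then ((q : ℝ) - 3) / ((q : ℝ) - 2) else (q : ℝ)) * (cnt {0, 2} q : ℝ) := by
    intro q hq
    have hqp : q.Prime := Nat.prime_of_mem_primesBelow hq
    by_cases h24 : 24 < q
    · rw [if_pos h24]
      rw [cnt_triple_eval hqp ht htg (by omega), cnt_pair_eval hqp,
        if_neg (fun h => absurd (Nat.le_of_dvd (by omega) h) (by omega))]
      have h2 : ((q : ℝ) - 2) ≠ 0 := by
        have : (25 : ℝ) ≤ (q : ℝ) := by exact_mod_cast Nat.le_of_lt_succ (by omega)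
        nlinarith
      rw [div_mul_eq_mul_div]
      rw [Nat.cast_sub (by omega), Nat.cast_sub (by omega)]
      push_cast
      rw [mul_div_assoc, div_self h2, mul_one]
    · rw [if_neg h24]
      have hnat : cnt {0, t, g} q ≤ q * cnt {0, 2} q := by
        calc cnt {0, t, g} q ≤ q - 1 := cnt_le_sub_one hqp _ (by simp)
          _ ≤ q * 1 := by omega
          _ ≤ q * cnt {0, 2} q := Nat.mul_le_mul_left _ (cnt_two_prime_pos hqp)
      calc (cnt {0, t, g} q : ℝ) ≤ ((q * cnt {0, 2} q : ℕ) : ℝ) := by exact_mod_cast hnat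
        _ = (q : ℝ) * (cnt {0, 2} q : ℝ) := by push_cast; ring
  have hprod : (cnt {0, t, g} (primorial p) : ℝ) = ∏ q ∈ s, (cnt {0, t, g} q : ℝ) := by
    rw [cnt_primorial]; push_cast; rfl
  have hprod2 : (cnt {0, 2} (primorial p) : ℝ) = ∏ q ∈ s, (cnt {0, 2} q : ℝ) := by
    rw [cnt_primorial]; push_cast; rfl
  rw [hprod, hprod2]
  calc ∏ q ∈ s, (cnt {0, t, g} q : ℝ)
      ≤ ∏ q ∈ s, ((if 24 < q then ((q : ℝ) - 3) / ((q : ℝ) - 2) else (q : ℝ)) *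
          (cnt {0, 2} q : ℝ)) := by
        refine Finset.prod_le_prod (fun q _ => by positivity) key
    _ = (∏ q ∈ s, (if 24 < q then ((q : ℝ) - 3) / ((q : ℝ) - 2) else (q : ℝ))) *
          ∏ q ∈ s, (cnt {0, 2} q : ℝ) := Finset.prod_mul_distrib
    _ ≤ ((primorial 24 : ℝ) *
          ∏ q ∈ s.filter (fun q => 24 < q), (((q : ℝ) - 3) / ((q : ℝ) - 2))) *
          ∏ q ∈ s, (cnt {0, 2} q : ℝ) := by
        refine mul_le_mul_of_nonneg_right ?_ (Finset.prod_nonneg fun q _ => by positivity)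
        rw [← Finset.prod_filter_mul_prod_filter_not s (fun q => 24 < q)]
        rw [Finset.prod_congr rfl (fun q hq => if_pos (Finset.mem_filter.mp hq).2),
          Finset.prod_congr rfl (fun q (hq : q ∈ s.filter _) =>
            if_neg (Finset.mem_filter.mp hq).2)]
        rw [mul_comm]
        refine mul_le_mul_of_nonneg_right ?_ ?_
        · have hsub : s.filter (fun q => ¬ 24 < q) ⊆ (25).primesBelow := by
            intro q hq
            rw [Finset.mem_filter] at hq
            exact Nat.mem_primesBelow.mpr ⟨by omega,
              Nat.prime_of_mem_primesBelow hq.1⟩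
          have : ∏ q ∈ s.filter (fun q => ¬ 24 < q), q ≤ ∏ q ∈ (25).primesBelow, q := by
            refine Finset.prod_le_prod_of_subset_of_one_le' hsub fun q hq _ =>
              (Nat.prime_of_mem_primesBelow hq).one_lt.le
          calc (∏ q ∈ s.filter (fun q => ¬ 24 < q), (q : ℝ))
              = ((∏ q ∈ s.filter (fun q => ¬ 24 < q), q : ℕ) : ℝ) := by push_cast; rfl
            _ ≤ ((∏ q ∈ (25).primesBelow, q : ℕ) : ℝ) := by exact_mod_cast this
            _ = (primorial 24 : ℝ) := by rw [← primorial_eq_prod]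
        · refine Finset.prod_nonneg fun q hq => ?_
          rw [Finset.mem_filter] at hq
          have : (24 : ℝ) < (q : ℝ) := by exact_mod_cast hq.2
          exact div_nonneg (by linarith) (by linarith)


lemma sum_primes_tendsto :
    Filter.Tendsto (fun p : ℕ => ∑ q ∈ ((p + 1).primesBelow).filter (fun q => 24 < q),
      (1 / (q : ℝ))) Filter.atTop Filter.atTop := by
  have hnn : ∀ n : ℕ, 0 ≤ Set.indicator {p : ℕ | p.Prime} (fun n : ℕ => (1 : ℝ) / n) n := by
    intro n
    exact Set.indicator_nonneg (fun m _ => by positivity) n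
  have hdiv := (not_summable_iff_tendsto_nat_atTop_of_nonneg hnn).mp
    not_summable_one_div_on_primes
  have hfull : Filter.Tendsto (fun p : ℕ => ∑ q ∈ (p + 1).primesBelow, (1 / (q : ℝ)))
      Filter.atTop Filter.atTop := by
    have hcomp := hdiv.comp (Filter.tendsto_add_atTop_nat 1)
    refine hcomp.congr fun p => ?_
    show ∑ i ∈ Finset.range (p + 1), Set.indicator {p : ℕ | p.Prime} (fun n : ℕ => (1 : ℝ) / n) i
        = _
    rw [Nat.primesBelow, Finset.sum_filter]
    refine Finset.sum_congr rfl fun i _ => ?_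
    rw [Set.indicator_apply]
    simp [Set.mem_setOf_eq]
  have hbound : ∀ p : ℕ, (∑ q ∈ (p + 1).primesBelow, (1 / (q : ℝ))) - 25 ≤
      ∑ q ∈ ((p + 1).primesBelow).filter (fun q => 24 < q), (1 / (q : ℝ)) := by
    intro p
    rw [← Finset.sum_filter_add_sum_filter_not ((p + 1).primesBelow) (fun q => 24 < q)]
    have hsmall : ∑ q ∈ ((p + 1).primesBelow).filter (fun q => ¬ 24 < q), (1 / (q : ℝ)) ≤ 25 := by
      calc ∑ q ∈ ((p + 1).primesBelow).filter (fun q => ¬ 24 < q), (1 / (q : ℝ))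
          ≤ ∑ _q ∈ ((p + 1).primesBelow).filter (fun q => ¬ 24 < q), (1 : ℝ) := by
            refine Finset.sum_le_sum fun q hq => ?_
            have : 2 ≤ q := (Nat.prime_of_mem_primesBelow
              (Finset.mem_filter.mp hq).1).two_le
            rw [div_le_one (by positivity)]
            have h1 : (1 : ℕ) ≤ q := by omega
            exact_mod_cast h1
        _ = (((p + 1).primesBelow).filter (fun q => ¬ 24 < q)).card := by simp
        _ ≤ 25 := by
            have hsub : ((p + 1).primesBelow).filter (fun q => ¬ 24 < q) ⊆ Finset.range 25 := by
              intro q hq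
              rw [Finset.mem_filter] at hq
              exact Finset.mem_range.mpr (by omega)
            exact_mod_cast (Finset.card_le_card hsub).trans (by simp)
    linarith
  exact Filter.tendsto_atTop_mono hbound
    (Filter.tendsto_atTop_add_const_right _ (-25) hfull |>.congr fun p => by ring)

lemma prod_ratio_tendsto_zero :
    Filter.Tendsto (fun p : ℕ => ∏ q ∈ ((p + 1).primesBelow).filter (fun q => 24 < q),
      (((q : ℝ) - 3) / ((q : ℝ) - 2))) Filter.atTop (nhds 0) := by
  have hnn : ∀ p : ℕ, 0 ≤ ∏ q ∈ ((p + 1).primesBelow).filter (fun q => 24 < q),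
      (((q : ℝ) - 3) / ((q : ℝ) - 2)) := by
    intro p
    refine Finset.prod_nonneg fun q hq => ?_
    have : (24 : ℝ) < (q : ℝ) := by exact_mod_cast (Finset.mem_filter.mp hq).2
    exact div_nonneg (by linarith) (by linarith)
  have hb : ∀ p : ℕ, ∏ q ∈ ((p + 1).primesBelow).filter (fun q => 24 < q),
      (((q : ℝ) - 3) / ((q : ℝ) - 2)) ≤
      Real.exp (-(∑ q ∈ ((p + 1).primesBelow).filter (fun q => 24 < q), (1 / (q : ℝ)))) := by
    intro p
    have hpt : ∀ q ∈ ((p + 1).primesBelow).filter (fun q => 24 < q),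
        ((q : ℝ) - 3) / ((q : ℝ) - 2) ≤ Real.exp (-(1 / (q : ℝ))) := by
      intro q hq
      have hq24 : (24 : ℝ) < (q : ℝ) := by exact_mod_cast (Finset.mem_filter.mp hq).2
      have h2 : (0 : ℝ) < (q : ℝ) - 2 := by linarith
      have heq : ((q : ℝ) - 3) / ((q : ℝ) - 2) = 1 + (-(1 / ((q : ℝ) - 2))) := by
        field_simp
        ring
      rw [heq]
      calc 1 + (-(1 / ((q : ℝ) - 2))) ≤ Real.exp (-(1 / ((q : ℝ) - 2))) := by
            have := Real.add_one_le_exp (-(1 / ((q : ℝ) - 2)))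
            linarith
        _ ≤ Real.exp (-(1 / (q : ℝ))) := by
            apply Real.exp_le_exp.mpr
            have : 1 / (q : ℝ) ≤ 1 / ((q : ℝ) - 2) :=
              one_div_le_one_div_of_le h2 (by linarith)
            linarith
    calc ∏ q ∈ ((p + 1).primesBelow).filter (fun q => 24 < q), (((q : ℝ) - 3) / ((q : ℝ) - 2))
        ≤ ∏ q ∈ ((p + 1).primesBelow).filter (fun q => 24 < q), Real.exp (-(1 / (q : ℝ))) := by
          refine Finset.prod_le_prod (fun q hq => ?_) hpt
          have : (24 : ℝ) < (q : ℝ) := by exact_mod_cast (Finset.mem_filter.mp hq).2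
          exact div_nonneg (by linarith) (by linarith)
      _ = Real.exp (∑ q ∈ ((p + 1).primesBelow).filter (fun q => 24 < q), -(1 / (q : ℝ))) :=
          (Real.exp_sum _ _).symm
      _ = Real.exp (-(∑ q ∈ ((p + 1).primesBelow).filter (fun q => 24 < q), (1 / (q : ℝ)))) := by
          rw [Finset.sum_neg_distrib]
  have hexp : Filter.Tendsto (fun p : ℕ =>
      Real.exp (-(∑ q ∈ ((p + 1).primesBelow).filter (fun q => 24 < q), (1 / (q : ℝ)))))
      Filter.atTop (nhds 0) :=
    Real.tendsto_exp_atBot.comp (Filter.tendsto_neg_atTop_atBot.comp sum_primes_tendsto)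
  exact squeeze_zero hnn hb hexp

theorem ratio_tendsto_two : ∀ g ∈ ({6, 12, 18, 24} : Finset ℕ),
    Filter.Tendsto (fun p : ℕ => (Ncount p [g] : ℝ) / (Ncount p [2] : ℝ))
      (Filter.atTop ⊓ Filter.principal {p : ℕ | p.Prime}) (nhds 2) := by
  have main : ∀ g : ℕ, 2 ∣ g → 3 ∣ g → 0 < g → g ≤ 24 → (∀ q, q.Prime → q ∣ g → q ≤ 3) →
      Filter.Tendsto (fun p : ℕ => (Ncount p [g] : ℝ) / (Ncount p [2] : ℝ))
        (Filter.atTop ⊓ Filter.principal {p : ℕ | p.Prime}) (nhds 2) := by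
    intro g hg2 hg3 hg0 hg24 hfac
    classical
    set K : ℝ := 24 * (primorial 24 : ℝ) with hK
    set Pi : ℕ → ℝ := fun p => ∏ q ∈ ((p + 1).primesBelow).filter (fun q => 24 < q),
      (((q : ℝ) - 3) / ((q : ℝ) - 2)) with hPi
    have hmain : ∀ p : ℕ, 25 ≤ p →
        2 - K * Pi p ≤ (Ncount p [g] : ℝ) / (Ncount p [2] : ℝ) ∧
        (Ncount p [g] : ℝ) / (Ncount p [2] : ℝ) ≤ 2 := by
      intro p hp
      have hN2 : Ncount p [2] = cnt {0, 2} (primorial p) := Ncount_two_eq (by omega)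
      have hpos : 0 < cnt {0, 2} (primorial p) := cnt_two_pos p
      have hposR : (0 : ℝ) < (Ncount p [2] : ℝ) := by
        rw [hN2]; exact_mod_cast hpos
      have hup : Ncount p [g] ≤ 2 * Ncount p [2] := by
        rw [hN2]
        exact (Ncount_g_le hg0).trans
          (le_of_eq (cnt_g_eq_two_mul (by omega) hg2 hg3 hfac))
      constructor
      · rw [le_div_iff₀ hposR]
        have hA := cnt_le_Ncount_add (p := p) (g := g) (by omega) hg0
        rw [cnt_g_eq_two_mul (by omega) hg2 hg3 hfac] at hA
        have hAR : 2 * (Ncount p [2] : ℝ) ≤ (Ncount p [g] : ℝ) +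
            ((∑ t ∈ (Finset.Ioo 0 g).filter (fun t => 2 ∣ t),
              cnt {0, t, g} (primorial p) : ℕ) : ℝ) := by
          rw [hN2]
          exact_mod_cast hA
        have hsumR : ((∑ t ∈ (Finset.Ioo 0 g).filter (fun t => 2 ∣ t),
            cnt {0, t, g} (primorial p) : ℕ) : ℝ) ≤ K * Pi p * (Ncount p [2] : ℝ) := by
          rw [Nat.cast_sum, hN2]
          calc ∑ t ∈ (Finset.Ioo 0 g).filter (fun t => 2 ∣ t),
                (cnt {0, t, g} (primorial p) : ℝ)
              ≤ ∑ _t ∈ (Finset.Ioo 0 g).filter (fun t => 2 ∣ t),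
                (primorial 24 : ℝ) * Pi p * (cnt {0, 2} (primorial p) : ℝ) := by
                refine Finset.sum_le_sum fun t ht => ?_
                rw [Finset.mem_filter, Finset.mem_Ioo] at ht
                exact cnt_triple_le hp ht.1.1 ht.1.2 hg24
            _ = (((Finset.Ioo 0 g).filter (fun t => 2 ∣ t)).card : ℝ) *
                ((primorial 24 : ℝ) * Pi p * (cnt {0, 2} (primorial p) : ℝ)) := by
                rw [Finset.sum_const, nsmul_eq_mul]
            _ ≤ K * Pi p * (cnt {0, 2} (primorial p) : ℝ) := by
                have hcard : (((Finset.Ioo 0 g).filter (fun t => 2 ∣ t)).card : ℝ) ≤ 24 := by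
                  have h1 : ((Finset.Ioo 0 g).filter (fun t => 2 ∣ t)).card ≤ 24 := by
                    calc ((Finset.Ioo 0 g).filter (fun t => 2 ∣ t)).card
                        ≤ (Finset.Ioo 0 g).card := Finset.card_le_card (Finset.filter_subset _ _)
                      _ ≤ 24 := by rw [Nat.card_Ioo]; omega
                  exact_mod_cast h1
                have hPinn : 0 ≤ Pi p := by
                  refine Finset.prod_nonneg fun q hq => ?_
                  have : (24 : ℝ) < (q : ℝ) := by
                    exact_mod_cast (Finset.mem_filter.mp hq).2
                  exact div_nonneg (by linarith) (by linarith)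
                have hprim : (0 : ℝ) ≤ (primorial 24 : ℝ) := by positivity
                have hc2 : (0 : ℝ) ≤ (cnt {0, 2} (primorial p) : ℝ) := by positivity
                rw [hK]
                nlinarith [mul_nonneg (mul_nonneg hprim hPinn) hc2,
                  mul_le_mul_of_nonneg_right hcard (mul_nonneg (mul_nonneg hprim hPinn) hc2)]
        nlinarith
      · rw [div_le_iff₀ hposR]
        calc (Ncount p [g] : ℝ) ≤ ((2 * Ncount p [2] : ℕ) : ℝ) := by exact_mod_cast hup
          _ = 2 * (Ncount p [2] : ℝ) := by push_cast; ring
    have hlow : Filter.Tendsto (fun p : ℕ => 2 - K * Pi p)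
        (Filter.atTop ⊓ Filter.principal {p : ℕ | p.Prime}) (nhds 2) := by
      have h1 : Filter.Tendsto (fun p : ℕ => 2 - K * Pi p) Filter.atTop (nhds (2 - K * 0)) :=
        tendsto_const_nhds.sub (prod_ratio_tendsto_zero.const_mul K)
      rw [mul_zero, sub_zero] at h1
      exact h1.mono_left inf_le_left
    refine tendsto_of_tendsto_of_tendsto_of_le_of_le' hlow
      (tendsto_const_nhds (x := (2 : ℝ))) ?_ ?_
    · exact (Filter.eventually_atTop.mpr ⟨25, fun p hp => (hmain p hp).1⟩).filter_mono
        inf_le_left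
    · exact (Filter.eventually_atTop.mpr ⟨25, fun p hp => (hmain p hp).2⟩).filter_mono
        inf_le_left
  intro g hg
  fin_cases hg
  · exact main 6 (by norm_num) (by norm_num) (by norm_num) (by norm_num)
      (fun q hq hd => by
        have := Nat.le_of_dvd (by norm_num) hd
        interval_cases q <;> revert hq hd <;> decide)
  · exact main 12 (by norm_num) (by norm_num) (by norm_num) (by norm_num)
      (fun q hq hd => by
        have := Nat.le_of_dvd (by norm_num) hd
        interval_cases q <;> revert hq hd <;> decide)
  · exact main 18 (by norm_num) (by norm_num) (by norm_num) (by norm_num)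
      (fun q hq hd => by
        have := Nat.le_of_dvd (by norm_num) hd
        interval_cases q <;> revert hq hd <;> decide)
  · exact main 24 (by norm_num) (by norm_num) (by norm_num) (by norm_num)
      (fun q hq hd => by
        have := Nat.le_of_dvd (by norm_num) hd
        interval_cases q <;> revert hq hd <;> decide)
end

section
/- The ratio N_p(30)/N_p(2) of the number of gaps equal to 30 in the cycle of gaps 𝒢(p#) to the number of gaps equal to 2 in 𝒢(p#) converges to 8/3 as p → ∞ through the primes. -/
open Finset

open Finset

noncomputable section

/-- number of forbidden residues mod q for pattern T -/
def rho (q : ℕ) (T : Finset ℕ) : ℕ := (T.image (fun t : ℕ => -(t : ZMod q))).card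

/-- count of residues r mod P with r+t a unit for all t in T -/
def Acard (P : ℕ) (T : Finset ℕ) : ℕ :=
  Nat.card {r : ZMod P // ∀ t ∈ T, IsUnit (r + (t : ZMod P))}

lemma Acard_one (T : Finset ℕ) : Acard 1 T = 1 := by
  have : Nonempty {r : ZMod 1 // ∀ t ∈ T, IsUnit (r + (t : ZMod 1))} :=
    ⟨0, fun t _ => isUnit_of_subsingleton _⟩
  exact Nat.card_unique

lemma isUnit_prod_iff {M N : Type*} [Monoid M] [Monoid N] {a : M} {b : N} :
    IsUnit (a, b) ↔ IsUnit a ∧ IsUnit b := by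
  constructor
  · rintro ⟨u, hu⟩
    refine ⟨⟨⟨u.1.1, (u⁻¹).1.1, congrArg Prod.fst u.mul_inv, congrArg Prod.fst u.inv_mul⟩,
        congrArg Prod.fst hu⟩,
      ⟨⟨u.1.2, (u⁻¹).1.2, congrArg Prod.snd u.mul_inv, congrArg Prod.snd u.inv_mul⟩,
        congrArg Prod.snd hu⟩⟩
  · rintro ⟨⟨u, hu⟩, ⟨v, hv⟩⟩
    exact ⟨⟨(u.1, v.1), ((u⁻¹).1, (v⁻¹).1), by ext <;> simp, by ext <;> simp⟩,
      by rw [← hu, ← hv]⟩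

lemma Acard_mul {m n : ℕ} (h : m.Coprime n) (T : Finset ℕ) :
    Acard (m * n) T = Acard m T * Acard n T := by
  rw [Acard, Acard, Acard, ← Nat.card_prod]
  refine Nat.card_congr ?_
  let e := ZMod.chineseRemainder h
  refine (Equiv.subtypeEquiv e.toEquiv (fun r => ?_)).trans Equiv.subtypeProdEquivProd
  constructor
  · intro hr
    constructor
    · intro t ht
      have := (hr t ht).map e.toRingHom
      rw [map_add, map_natCast] at this
      exact (isUnit_prod_iff.mp this).1
    · intro t ht
      have := (hr t ht).map e.toRingHom
      rw [map_add, map_natCast] at this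
      exact (isUnit_prod_iff.mp this).2
  · rintro ⟨h1, h2⟩ t ht
    have : IsUnit (e.toEquiv r + ((t : ℕ) : ZMod m × ZMod n)) := by
      rw [isUnit_prod_iff]
      have e1 : ((t : ℕ) : ZMod m × ZMod n) = (((t : ℕ) : ZMod m), ((t : ℕ) : ZMod n)) := by
        simp [Prod.ext_iff]
      rw [e1]
      exact ⟨h1 t ht, h2 t ht⟩
    have := this.map e.symm.toRingHom
    rw [map_add, map_natCast] at this
    simpa using this

lemma Acard_prime {q : ℕ} (hq : q.Prime) (T : Finset ℕ) : Acard q T = q - rho q T := by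
  haveI : Fact q.Prime := ⟨hq⟩
  rw [Acard, Nat.card_eq_fintype_card, Fintype.card_subtype]
  have key : Finset.univ.filter (fun r : ZMod q => ∀ t ∈ T, IsUnit (r + (t : ZMod q)))
      = Finset.univ \ (T.image (fun t : ℕ => -(t : ZMod q))) := by
    ext r
    simp only [mem_filter, mem_univ, true_and, mem_sdiff, mem_image]
    constructor
    · intro hr
      rintro ⟨t, ht, heq⟩
      have h2 := hr t ht
      rw [← heq] at h2
      simp at h2
    · intro hr t ht
      rw [isUnit_iff_ne_zero]
      intro h0
      exact hr ⟨t, ht, by linear_combination -h0⟩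
  rw [key, card_sdiff_of_subset (subset_univ _), card_univ, ZMod.card, rho]

lemma Acard_prod (F : Finset ℕ) (hF : ∀ q ∈ F, q.Prime) (T : Finset ℕ) :
    Acard (∏ q ∈ F, q) T = ∏ q ∈ F, (q - rho q T) := by
  classical
  induction F using Finset.induction with
  | empty => simpa using Acard_one T
  | insert _ _ hq ih =>
    rename_i a s
    rw [prod_insert hq, prod_insert hq]
    have hcop : a.Coprime (∏ q ∈ s, q) := by
      refine Nat.Coprime.prod_right (fun i hi => ?_)
      have := hF a (mem_insert_self a s)
      have hip := hF i (mem_insert_of_mem hi)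
      exact (Nat.coprime_primes this hip).mpr (by rintro rfl; exact hq hi)
    rw [Acard_mul hcop, Acard_prime (hF a (mem_insert_self a s)),
      ih (fun q hqs => hF q (mem_insert_of_mem hqs))]

lemma Acard_primorial (p : ℕ) (T : Finset ℕ) :
    Acard (primorial p) T = ∏ q ∈ (Finset.range (p+1)).filter Nat.Prime, (q - rho q T) := by
  rw [primorial]
  exact Acard_prod _ (fun q hq => (mem_filter.mp hq).2) T

open Finset

noncomputable section

def Gpred (P g : ℕ) (x : ZMod P) : Prop :=
  IsUnit x ∧ IsUnit (x + (g : ZMod P)) ∧ ∀ j ∈ Finset.Ioo 0 g, ¬ IsUnit (x + (j : ZMod P))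

open scoped Classical in
lemma card_Icc_filter_s14 {P : ℕ} (hP : 0 < P) (Q : ZMod P → Prop) :
    ((Finset.Icc 1 P).filter (fun r : ℕ => Q (r : ZMod P))).card
      = Nat.card {x : ZMod P // Q x} := by
  classical
  haveI : NeZero P := ⟨hP.ne'⟩
  rw [Nat.card_eq_fintype_card, Fintype.card_subtype]
  apply Finset.card_bij (fun (r : ℕ) _ => (r : ZMod P))
  · intro a ha
    simp only [mem_filter, mem_univ, true_and]
    exact (mem_filter.mp ha).2
  · intro a ha b hb hab
    have ha' := mem_Icc.mp (mem_filter.mp ha).1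
    have hb' := mem_Icc.mp (mem_filter.mp hb).1
    have hmod : a % P = b % P := (ZMod.natCast_eq_natCast_iff a b P).mp hab
    rcases eq_or_lt_of_le ha'.2 with h1 | h1 <;> rcases eq_or_lt_of_le hb'.2 with h2 | h2
    · rw [h1, h2]
    · rw [h1, Nat.mod_self, Nat.mod_eq_of_lt h2] at hmod
      omega
    · rw [h2, Nat.mod_self, Nat.mod_eq_of_lt h1] at hmod
      omega
    · rwa [Nat.mod_eq_of_lt h1, Nat.mod_eq_of_lt h2] at hmod
  · intro x hx
    have hxQ : Q x := by simpa using hx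
    by_cases h0 : x = 0
    · refine ⟨P, mem_filter.mpr ⟨mem_Icc.mpr ⟨hP, le_refl P⟩, ?_⟩, ?_⟩
      · rw [ZMod.natCast_self]; rw [h0] at hxQ; exact hxQ
      · rw [ZMod.natCast_self, h0]
    · have hval : (x.val : ZMod P) = x := ZMod.natCast_rightInverse x
      refine ⟨x.val, mem_filter.mpr ⟨mem_Icc.mpr ⟨?_, (ZMod.val_lt x).le⟩, by rwa [hval]⟩, hval⟩
      exact Nat.pos_of_ne_zero (fun h => h0 ((ZMod.val_eq_zero x).mp h))

lemma ncount_eq_gcard (p g : ℕ) (hg : 0 < g) (hp : 0 < primorial p) :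
    Ncount p [g] = Nat.card {x : ZMod (primorial p) // Gpred (primorial p) g x} := by
  classical
  haveI : NeZero (primorial p) := ⟨hp.ne'⟩
  rw [← card_Icc_filter_s14 hp (Gpred (primorial p) g)]
  rw [Ncount]
  congr 1
  apply Finset.filter_congr
  intro r hr
  have hr1 : 1 ≤ r := (mem_Icc.mp hr).1
  simp only [MatchesGaps, and_true, IsNextTot, Gpred]
  constructor
  · rintro ⟨hc, -, hcg, hbetween⟩
    refine ⟨?_, ?_, ?_⟩
    · exact (ZMod.isUnit_iff_coprime r (primorial p)).mpr hc
    · have := (ZMod.isUnit_iff_coprime (r + g) (primorial p)).mpr hcg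
      rwa [Nat.cast_add] at this
    · intro j hj
      have hj' := mem_Ioo.mp hj
      have := hbetween (r + j) (by omega) (by omega)
      intro hu
      apply this
      apply (ZMod.isUnit_iff_coprime (r + j) (primorial p)).mp
      rwa [Nat.cast_add]
  · rintro ⟨hu, hug, hbetween⟩
    refine ⟨(ZMod.isUnit_iff_coprime r (primorial p)).mp hu, by omega, ?_, ?_⟩
    · apply (ZMod.isUnit_iff_coprime (r + g) (primorial p)).mp
      rwa [Nat.cast_add]
    · intro x hx1 hx2 hcx
      have hj : x = r + (x - r) := by omega
      have hmem : x - r ∈ Finset.Ioo 0 g := mem_Ioo.mpr ⟨by omega, by omega⟩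
      apply hbetween (x - r) hmem
      have := (ZMod.isUnit_iff_coprime x (primorial p)).mpr hcx
      rw [hj, Nat.cast_add] at this
      exact this

lemma Acard_eq_sum (P : ℕ) [NeZero P] (T : Finset ℕ) :
    (Acard P T : ℤ)
      = ∑ x : ZMod P, if ∀ t ∈ T, IsUnit (x + (t : ZMod P)) then (1 : ℤ) else 0 := by
  classical
  rw [Finset.sum_boole, Acard, Nat.card_eq_fintype_card, Fintype.card_subtype]

lemma gcard_eq_sum (P g : ℕ) [NeZero P] (hg : 0 < g) :
    (Nat.card {x : ZMod P // Gpred P g x} : ℤ)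
      = ∑ S ∈ (Finset.Ioo 0 g).powerset,
          (-1 : ℤ) ^ S.card * (Acard P (insert 0 (insert g S)) : ℤ) := by
  classical
  set u : ZMod P → ℕ → ℤ := fun x t => if IsUnit (x + (t : ZMod P)) then 1 else 0 with hu
  have step1 : (Nat.card {x : ZMod P // Gpred P g x} : ℤ)
      = ∑ x : ZMod P, if Gpred P g x then (1 : ℤ) else 0 := by
    rw [Finset.sum_boole, Nat.card_eq_fintype_card, Fintype.card_subtype]
  have step2 : ∀ x : ZMod P, (if Gpred P g x then (1 : ℤ) else 0)
      = u x 0 * u x g * ∏ j ∈ Finset.Ioo 0 g, (1 - u x j) := by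
    intro x
    by_cases h3 : ∀ j ∈ Finset.Ioo 0 g, ¬ IsUnit (x + (j : ZMod P))
    · have hprod : ∏ j ∈ Finset.Ioo 0 g, (1 - u x j) = 1 := by
        apply Finset.prod_eq_one
        intro j hj
        simp [hu, h3 j hj]
      rw [hprod]
      have h3' : ∀ (y : ℕ), 0 < y → y < g → ¬IsUnit (x + (y : ZMod P)) := by
        intro y hy1 hy2
        exact h3 y (Finset.mem_Ioo.mpr ⟨hy1, hy2⟩)
      by_cases h1 : IsUnit x <;> by_cases h2 : IsUnit (x + (g : ZMod P)) <;>
        simp [Gpred, h1, h2, hu] <;> exact h3'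
    · push_neg at h3
      obtain ⟨j, hj, hju⟩ := h3
      have hprod : ∏ j ∈ Finset.Ioo 0 g, (1 - u x j) = 0 := by
        apply Finset.prod_eq_zero hj
        simp [hu, hju]
      rw [hprod, mul_zero]
      have : ¬ Gpred P g x := by
        rintro ⟨-, -, hall⟩
        exact hall j hj hju
      simp [this]
  have step3 : ∀ x : ZMod P, ∏ j ∈ Finset.Ioo 0 g, (1 - u x j)
      = ∑ S ∈ (Finset.Ioo 0 g).powerset, (-1 : ℤ) ^ S.card * ∏ j ∈ S, u x j := by
    intro x
    have h := Finset.prod_add (fun j => -u x j) (fun _ => (1 : ℤ)) (Finset.Ioo 0 g)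
    simp only [Finset.prod_const_one, mul_one] at h
    have hL : ∏ j ∈ Finset.Ioo 0 g, (1 - u x j)
        = ∏ j ∈ Finset.Ioo 0 g, (-u x j + 1) := by
      apply Finset.prod_congr rfl
      intro j _
      ring
    rw [hL, h]
    apply Finset.sum_congr rfl
    intro S _
    calc ∏ i ∈ S, -u x i = ∏ i ∈ S, (-1 : ℤ) * u x i := by
          exact Finset.prod_congr rfl fun i _ => by ring
      _ = (∏ _i ∈ S, (-1 : ℤ)) * ∏ i ∈ S, u x i := Finset.prod_mul_distrib
      _ = (-1 : ℤ) ^ S.card * ∏ i ∈ S, u x i := by rw [Finset.prod_const]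
  have step4 : ∀ (S : Finset ℕ), S ∈ (Finset.Ioo 0 g).powerset →
      ∀ x : ZMod P, u x 0 * (u x g * ∏ j ∈ S, u x j)
        = ∏ t ∈ insert 0 (insert g S), u x t := by
    intro S hS x
    have hSsub := Finset.mem_powerset.mp hS
    have hgS : g ∉ S := fun h => by simpa using (Finset.mem_Ioo.mp (hSsub h)).2
    have h0S : (0 : ℕ) ∉ insert g S := by
      simp only [Finset.mem_insert]
      rintro (h | h)
      · omega
      · simpa using (Finset.mem_Ioo.mp (hSsub h)).1
    rw [Finset.prod_insert h0S, Finset.prod_insert hgS]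
  calc (Nat.card {x : ZMod P // Gpred P g x} : ℤ)
      = ∑ x : ZMod P, u x 0 * u x g * ∏ j ∈ Finset.Ioo 0 g, (1 - u x j) := by
        rw [step1]; exact Finset.sum_congr rfl fun x _ => step2 x
    _ = ∑ x : ZMod P, ∑ S ∈ (Finset.Ioo 0 g).powerset,
          (-1 : ℤ) ^ S.card * (u x 0 * (u x g * ∏ j ∈ S, u x j)) := by
        apply Finset.sum_congr rfl
        intro x _
        rw [step3 x, Finset.mul_sum]
        exact Finset.sum_congr rfl fun S _ => by ring
    _ = ∑ S ∈ (Finset.Ioo 0 g).powerset,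
          (-1 : ℤ) ^ S.card * ∑ x : ZMod P, ∏ t ∈ insert 0 (insert g S), u x t := by
        rw [Finset.sum_comm]
        apply Finset.sum_congr rfl
        intro S hS
        rw [Finset.mul_sum]
        exact Finset.sum_congr rfl fun x _ => by rw [step4 S hS x]
    _ = ∑ S ∈ (Finset.Ioo 0 g).powerset,
          (-1 : ℤ) ^ S.card * (Acard P (insert 0 (insert g S)) : ℤ) := by
        apply Finset.sum_congr rfl
        intro S _
        congr 1
        rw [Acard_eq_sum]
        apply Finset.sum_congr rfl
        intro x _
        rw [Finset.prod_boole]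

def Pset (p : ℕ) : Finset ℕ := (Finset.range (p+1)).filter Nat.Prime

def Aprod (p : ℕ) (T : Finset ℕ) : ℕ := ∏ q ∈ Pset p, (q - rho q T)

lemma Acard_primorial' (p : ℕ) (T : Finset ℕ) : Acard (primorial p) T = Aprod p T :=
  Acard_primorial p T

lemma mem_Pset {p q : ℕ} : q ∈ Pset p ↔ q ≤ p ∧ q.Prime := by
  rw [Pset, Finset.mem_filter, Finset.mem_range, Nat.lt_succ_iff]

lemma rho_pair_eq_one {q c : ℕ} (h : ((c : ℕ) : ZMod q) = 0) : rho q {0, c} = 1 := by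
  rw [rho]
  have : ({0, c} : Finset ℕ).image (fun t : ℕ => -(t : ZMod q)) = {0} := by
    rw [Finset.image_insert, Finset.image_singleton, h]
    simp
  rw [this, Finset.card_singleton]

lemma rho_pair_eq_two {q c : ℕ} (h : ((c : ℕ) : ZMod q) ≠ 0) : rho q {0, c} = 2 := by
  rw [rho]
  have : ({0, c} : Finset ℕ).image (fun t : ℕ => -(t : ZMod q)) = {0, -(c : ZMod q)} := by
    rw [Finset.image_insert, Finset.image_singleton]
    simp
  rw [this]
  rw [Finset.card_insert_of_notMem, Finset.card_singleton]
  simp only [Finset.mem_singleton]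
  intro h0
  exact h (neg_eq_zero.mp h0.symm)

lemma rho_le_card (q : ℕ) (T : Finset ℕ) : rho q T ≤ T.card := Finset.card_image_le

lemma rho_02 {q : ℕ} (hq : q.Prime) (h2 : q ≠ 2) : rho q {0, 2} = 2 := by
  apply rho_pair_eq_two
  intro h0
  rw [ZMod.natCast_eq_zero_iff] at h0
  exact h2 ((Nat.prime_dvd_prime_iff_eq hq Nat.prime_two).mp h0)

lemma rho_030 {q : ℕ} (hq : q.Prime) (h2 : q ≠ 2) (h3 : q ≠ 3) (h5 : q ≠ 5) :
    rho q {0, 30} = 2 := by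
  apply rho_pair_eq_two
  intro h0
  rw [ZMod.natCast_eq_zero_iff] at h0
  have hdvd := h0
  have hle : q ≤ 30 := Nat.le_of_dvd (by norm_num) hdvd
  have : ∀ r < 31, r ∣ 30 → Nat.Prime r → r = 2 ∨ r = 3 ∨ r = 5 := by decide
  rcases this q (by omega) hdvd hq with h | h | h <;> tauto

lemma factor2_ge_one {q : ℕ} (hq : q.Prime) : 1 ≤ q - rho q {0, 2} := by
  by_cases h2 : q = 2
  · subst h2
    rw [rho_pair_eq_one (by decide)]
  · have := rho_02 hq h2
    have h3 : 3 ≤ q := by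
      have := hq.two_le
      omega
    omega

lemma one_le_D (p : ℕ) : 1 ≤ Aprod p {0, 2} :=
  Finset.one_le_prod' fun q hq => factor2_ge_one (mem_Pset.mp hq).2

lemma key_identity {p : ℕ} (hp : 5 ≤ p) :
    3 * Aprod p {0, 30} = 8 * Aprod p {0, 2} := by
  have h3 : 3 ∈ Pset p := mem_Pset.mpr ⟨by omega, by norm_num⟩
  have h5 : 5 ∈ (Pset p).erase 3 :=
    Finset.mem_erase.mpr ⟨by norm_num, mem_Pset.mpr ⟨by omega, by norm_num⟩⟩
  have expand : ∀ T : Finset ℕ, Aprod p T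
      = (3 - rho 3 T) * ((5 - rho 5 T) * ∏ q ∈ ((Pset p).erase 3).erase 5, (q - rho q T)) := by
    intro T
    rw [Aprod, ← Finset.mul_prod_erase _ _ h3, ← Finset.mul_prod_erase _ _ h5]
  rw [expand, expand]
  have hcongr : ∏ q ∈ ((Pset p).erase 3).erase 5, (q - rho q ({0, 30} : Finset ℕ))
      = ∏ q ∈ ((Pset p).erase 3).erase 5, (q - rho q ({0, 2} : Finset ℕ)) := by
    apply Finset.prod_congr rfl
    intro q hq
    have h5q := (Finset.mem_erase.mp hq).1
    have h3q := (Finset.mem_erase.mp (Finset.mem_erase.mp hq).2).1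
    have hqp := (mem_Pset.mp (Finset.mem_erase.mp (Finset.mem_erase.mp hq).2).2).2
    by_cases h2 : q = 2
    · subst h2
      rw [rho_pair_eq_one (by decide), rho_pair_eq_one (by decide)]
    · rw [rho_030 hqp h2 h3q h5q, rho_02 hqp h2]
  rw [hcongr]
  rw [rho_pair_eq_one (show ((30:ℕ) : ZMod 3) = 0 by decide),
    rho_pair_eq_one (show ((30:ℕ) : ZMod 5) = 0 by decide),
    rho_02 (by norm_num) (by norm_num), rho_02 (by norm_num) (by norm_num)]
  ring

def SIdx : Finset (Finset ℕ) := ((Finset.Ioo 0 30).powerset).erase ∅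

def TS (S : Finset ℕ) : Finset ℕ := insert 0 (insert 30 S)

lemma ncount2_eq (p : ℕ) (hp : 2 ≤ p) : Ncount p [2] = Aprod p {0, 2} := by
  haveI : NeZero (primorial p) := ⟨(primorial_pos p).ne'⟩
  have h1 : (Ncount p [2] : ℤ) = (Aprod p {0, 2} : ℤ) := by
    rw [ncount_eq_gcard p 2 (by norm_num) (primorial_pos p),
      gcard_eq_sum (primorial p) 2 (by norm_num)]
    have hIoo : (Finset.Ioo 0 2 : Finset ℕ) = {1} := by decide
    have hpow : ({1} : Finset ℕ).powerset = {∅, {1}} := by decide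
    rw [hIoo, hpow]
    rw [Finset.sum_insert (by decide), Finset.sum_singleton]
    have e0 : insert 0 (insert 2 (∅ : Finset ℕ)) = {0, 2} := by decide
    have e1 : insert 0 (insert 2 ({1} : Finset ℕ)) = {0, 1, 2} := by decide
    rw [e0, e1]
    have hzero : Acard (primorial p) {0, 1, 2} = 0 := by
      rw [Acard_primorial']
      apply Finset.prod_eq_zero (mem_Pset.mpr ⟨hp, Nat.prime_two⟩)
      have h2 : rho 2 {0, 1, 2} = 2 := by decide
      omega
    rw [hzero, Acard_primorial']
    simp
  exact_mod_cast h1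

lemma ncount30_eq (p : ℕ) :
    (Ncount p [30] : ℤ) = (Aprod p {0, 30} : ℤ)
      + ∑ S ∈ SIdx, (-1 : ℤ) ^ S.card * (Acard (primorial p) (TS S) : ℤ) := by
  haveI : NeZero (primorial p) := ⟨(primorial_pos p).ne'⟩
  rw [ncount_eq_gcard p 30 (by norm_num) (primorial_pos p),
    gcard_eq_sum (primorial p) 30 (by norm_num)]
  rw [← Finset.add_sum_erase _ _ (Finset.empty_mem_powerset (Finset.Ioo 0 30))]
  congr 1
  have e0 : insert 0 (insert 30 (∅ : Finset ℕ)) = ({0, 30} : Finset ℕ) := by decide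
  rw [e0, Acard_primorial']
  simp

def termR (p : ℕ) (T : Finset ℕ) : ℝ := (Aprod p T : ℝ) / (Aprod p {0, 2} : ℝ)

lemma termR_nonneg (p : ℕ) (T : Finset ℕ) : 0 ≤ termR p T :=
  div_nonneg (Nat.cast_nonneg _) (Nat.cast_nonneg _)

lemma termR_eq_prod (p : ℕ) (T : Finset ℕ) :
    termR p T = ∏ q ∈ Pset p, (((q - rho q T : ℕ) : ℝ) / ((q - rho q {0, 2} : ℕ) : ℝ)) := by
  rw [termR, Aprod, Aprod, Nat.cast_prod, Nat.cast_prod, Finset.prod_div_distrib]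

lemma rho_eq_card_of_large {q : ℕ} (hq : 30 < q) {T : Finset ℕ} (hT : ∀ t ∈ T, t ≤ 30) :
    rho q T = T.card := by
  rw [rho]
  apply Finset.card_image_of_injOn
  intro t1 h1 t2 h2 heq
  have hc : (t1 : ZMod q) = (t2 : ZMod q) := by
    have := congrArg Neg.neg heq
    simpa using this
  have hv := congrArg ZMod.val hc
  rwa [ZMod.val_cast_of_lt (by have := hT t1 h1; omega),
    ZMod.val_cast_of_lt (by have := hT t2 h2; omega)] at hv

lemma den_pos {q : ℕ} (hq : q.Prime) : (0 : ℝ) < ((q - rho q {0, 2} : ℕ) : ℝ) := by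
  have := factor2_ge_one hq
  exact_mod_cast Nat.lt_of_lt_of_le Nat.zero_lt_one this

lemma factor_le_q {q : ℕ} (hq : q.Prime) (T : Finset ℕ) :
    ((q - rho q T : ℕ) : ℝ) / ((q - rho q {0, 2} : ℕ) : ℝ) ≤ (q : ℝ) := by
  have hden : (1 : ℝ) ≤ ((q - rho q {0, 2} : ℕ) : ℝ) := by
    exact_mod_cast factor2_ge_one hq
  have hnum : ((q - rho q T : ℕ) : ℝ) ≤ (q : ℝ) := by
    exact_mod_cast Nat.sub_le q (rho q T)
  rw [div_le_iff₀ (by linarith)]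
  calc ((q - rho q T : ℕ) : ℝ) ≤ (q : ℝ) := hnum
    _ = (q : ℝ) * 1 := by ring
    _ ≤ (q : ℝ) * ((q - rho q {0, 2} : ℕ) : ℝ) := by
        apply mul_le_mul_of_nonneg_left hden (Nat.cast_nonneg q)

lemma factor_le_exp {q : ℕ} (hq : q.Prime) (h31 : 31 ≤ q) {T : Finset ℕ}
    (hT : ∀ t ∈ T, t ≤ 30) (hc : 3 ≤ T.card) :
    ((q - rho q T : ℕ) : ℝ) / ((q - rho q {0, 2} : ℕ) : ℝ) ≤ Real.exp (-(1 / (q : ℝ))) := by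
  have hrT : rho q T = T.card := rho_eq_card_of_large (by omega) hT
  have hr2 : rho q {0, 2} = 2 := rho_02 hq (by omega)
  have hcard31 : T.card ≤ 31 := by
    have : T ⊆ Finset.range 31 := fun t ht => Finset.mem_range.mpr (by have := hT t ht; omega)
    calc T.card ≤ (Finset.range 31).card := Finset.card_le_card this
      _ = 31 := by simp
  have hnum : ((q - rho q T : ℕ) : ℝ) ≤ (q : ℝ) - 3 := by
    rw [hrT]
    have : ((q - T.card : ℕ) : ℝ) = (q : ℝ) - (T.card : ℝ) := by
      have : T.card ≤ q := by omega
      push_cast [Nat.cast_sub this]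
      ring
    rw [this]
    have : (3 : ℝ) ≤ (T.card : ℝ) := by exact_mod_cast hc
    linarith
  have hden : ((q - rho q {0, 2} : ℕ) : ℝ) = (q : ℝ) - 2 := by
    rw [hr2]
    have h2q : 2 ≤ q := by omega
    push_cast [Nat.cast_sub h2q]
    ring
  have hq31 : (31 : ℝ) ≤ (q : ℝ) := by exact_mod_cast h31
  rw [hden, div_le_iff₀ (by linarith)]
  have hexp : 1 - 1 / (q : ℝ) ≤ Real.exp (-(1 / (q : ℝ))) := by
    have := Real.add_one_le_exp (-(1 / (q : ℝ)))
    linarith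
  have hqpos : (0 : ℝ) < (q : ℝ) := by linarith
  calc ((q - rho q T : ℕ) : ℝ) ≤ (q : ℝ) - 3 := hnum
    _ ≤ (1 - 1 / (q : ℝ)) * ((q : ℝ) - 2) := by
        have hexpand : (1 - 1 / (q : ℝ)) * ((q : ℝ) - 2) = (q : ℝ) - 3 + (2 / (q : ℝ)) := by
          field_simp
          ring
        have h2q : 0 ≤ 2 / (q : ℝ) := by positivity
        linarith
    _ ≤ Real.exp (-(1 / (q : ℝ))) * ((q : ℝ) - 2) := by
        apply mul_le_mul_of_nonneg_right hexp (by linarith)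

def C0 : ℝ := ((∏ q ∈ (Finset.range 31).filter Nat.Prime, q : ℕ) : ℝ)

lemma termR_le (p : ℕ) {T : Finset ℕ} (hT : ∀ t ∈ T, t ≤ 30) (hc : 3 ≤ T.card) :
    termR p T ≤ C0 * Real.exp (-(∑ q ∈ (Pset p).filter (fun q => ¬ q < 31), (1 / (q : ℝ)))) := by
  rw [termR_eq_prod]
  rw [← Finset.prod_filter_mul_prod_filter_not (Pset p) (fun q => q < 31)]
  have hsmall : ∏ q ∈ (Pset p).filter (fun q => q < 31),
      (((q - rho q T : ℕ) : ℝ) / ((q - rho q {0, 2} : ℕ) : ℝ)) ≤ C0 := by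
    calc ∏ q ∈ (Pset p).filter (fun q => q < 31),
        (((q - rho q T : ℕ) : ℝ) / ((q - rho q {0, 2} : ℕ) : ℝ))
        ≤ ∏ q ∈ (Pset p).filter (fun q => q < 31), (q : ℝ) := by
          apply Finset.prod_le_prod
          · intro q hq
            have hqp := (mem_Pset.mp (Finset.mem_filter.mp hq).1).2
            exact div_nonneg (Nat.cast_nonneg _) (Nat.cast_nonneg _)
          · intro q hq
            exact factor_le_q (mem_Pset.mp (Finset.mem_filter.mp hq).1).2 T
      _ ≤ C0 := by
          rw [C0, ← Nat.cast_prod]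
          apply Nat.cast_le.mpr
          apply Finset.prod_le_prod_of_subset_of_one_le'
          · intro q hq
            have h1 := Finset.mem_filter.mp hq
            have h2 := mem_Pset.mp h1.1
            exact Finset.mem_filter.mpr ⟨Finset.mem_range.mpr h1.2, h2.2⟩
          · intro q hq _
            have := (Finset.mem_filter.mp hq).2.two_le
            omega
  have hbig : ∏ q ∈ (Pset p).filter (fun q => ¬ q < 31),
      (((q - rho q T : ℕ) : ℝ) / ((q - rho q {0, 2} : ℕ) : ℝ))
      ≤ Real.exp (-(∑ q ∈ (Pset p).filter (fun q => ¬ q < 31), (1 / (q : ℝ)))) := by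
    rw [show -(∑ q ∈ (Pset p).filter (fun q => ¬ q < 31), (1 / (q : ℝ)))
        = ∑ q ∈ (Pset p).filter (fun q => ¬ q < 31), -(1 / (q : ℝ)) by
      rw [Finset.sum_neg_distrib]]
    rw [Real.exp_sum]
    apply Finset.prod_le_prod
    · intro q hq
      exact div_nonneg (Nat.cast_nonneg _) (Nat.cast_nonneg _)
    · intro q hq
      have h1 := Finset.mem_filter.mp hq
      exact factor_le_exp (mem_Pset.mp h1.1).2 (by omega) hT hc
  have hsnn : (0:ℝ) ≤ ∏ q ∈ (Pset p).filter (fun q => q < 31),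
      (((q - rho q T : ℕ) : ℝ) / ((q - rho q {0, 2} : ℕ) : ℝ)) :=
    Finset.prod_nonneg fun q _ => div_nonneg (Nat.cast_nonneg _) (Nat.cast_nonneg _)
  have hbnn : (0:ℝ) ≤ ∏ q ∈ (Pset p).filter (fun q => ¬ q < 31),
      (((q - rho q T : ℕ) : ℝ) / ((q - rho q {0, 2} : ℕ) : ℝ)) :=
    Finset.prod_nonneg fun q _ => div_nonneg (Nat.cast_nonneg _) (Nat.cast_nonneg _)
  exact mul_le_mul hsmall hbig hbnn (le_trans hsnn hsmall)

lemma sum_big_tendsto :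
    Filter.Tendsto (fun p => ∑ q ∈ (Pset p).filter (fun q => ¬ q < 31), (1 / (q : ℝ)))
      Filter.atTop Filter.atTop := by
  classical
  set f : ℕ → ℝ := Set.indicator {n | n.Prime} (fun n => 1 / (n : ℝ)) with hf
  have hnonneg : ∀ n, 0 ≤ f n := by
    intro n
    apply Set.indicator_nonneg
    intro a _
    positivity
  have hdiv : Filter.Tendsto (fun n => ∑ i ∈ Finset.range n, f i) Filter.atTop Filter.atTop :=
    (not_summable_iff_tendsto_nat_atTop_of_nonneg hnonneg).mp not_summable_one_div_on_primes
  have hsum_eq : ∀ n, ∑ i ∈ Finset.range n, f i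
      = ∑ q ∈ (Finset.range n).filter Nat.Prime, (1 / (q : ℝ)) := by
    intro n
    rw [Finset.sum_filter]
    apply Finset.sum_congr rfl
    intro i _
    rw [hf, Set.indicator_apply]
    simp [Set.mem_setOf_eq]
  set c1 : ℝ := ∑ q ∈ (Finset.range 31).filter Nat.Prime, (1 / (q : ℝ)) with hc1
  have hlow : ∀ p, (∑ i ∈ Finset.range (p + 1), f i) - c1
      ≤ ∑ q ∈ (Pset p).filter (fun q => ¬ q < 31), (1 / (q : ℝ)) := by
    intro p
    rw [hsum_eq]
    have hsplit : ∑ q ∈ (Pset p), (1 / (q : ℝ))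
        = ∑ q ∈ (Pset p).filter (fun q => q < 31), (1 / (q : ℝ))
          + ∑ q ∈ (Pset p).filter (fun q => ¬ q < 31), (1 / (q : ℝ)) :=
      (Finset.sum_filter_add_sum_filter_not (Pset p) _ _).symm
    have hsmall_le : ∑ q ∈ (Pset p).filter (fun q => q < 31), (1 / (q : ℝ)) ≤ c1 := by
      apply Finset.sum_le_sum_of_subset_of_nonneg
      · intro q hq
        have h1 := Finset.mem_filter.mp hq
        exact Finset.mem_filter.mpr ⟨Finset.mem_range.mpr h1.2, (mem_Pset.mp h1.1).2⟩
      · intro q _ _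
        positivity
    have : (Finset.range (p+1)).filter Nat.Prime = Pset p := rfl
    rw [this, hsplit]
    linarith
  apply Filter.tendsto_atTop_mono hlow
  apply Filter.tendsto_atTop_add_const_right
  exact hdiv.comp (Filter.tendsto_add_atTop_nat 1)

lemma termR_tendsto_zero {T : Finset ℕ} (hT : ∀ t ∈ T, t ≤ 30) (hc : 3 ≤ T.card) :
    Filter.Tendsto (fun p => termR p T) Filter.atTop (nhds 0) := by
  apply squeeze_zero' (Filter.Eventually.of_forall fun p => termR_nonneg p T)
    (Filter.Eventually.of_forall fun p => termR_le p hT hc)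
  have h1 : Filter.Tendsto
      (fun p => Real.exp (-(∑ q ∈ (Pset p).filter (fun q => ¬ q < 31), (1 / (q : ℝ)))))
      Filter.atTop (nhds 0) :=
    Real.tendsto_exp_atBot.comp (Filter.tendsto_neg_atTop_atBot.comp sum_big_tendsto)
  have := h1.const_mul C0
  simpa using this

lemma Gsum_tendsto :
    Filter.Tendsto (fun p => ∑ S ∈ SIdx, termR p (TS S)) Filter.atTop (nhds 0) := by
  have h0 : (0 : ℝ) = ∑ _S ∈ SIdx, (0 : ℝ) := by simp
  rw [h0]
  apply tendsto_finset_sum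
  intro S hS
  have hS1 : S ⊆ Finset.Ioo 0 30 := Finset.mem_powerset.mp (Finset.mem_erase.mp hS).2
  have hSne : S ≠ ∅ := (Finset.mem_erase.mp hS).1
  apply termR_tendsto_zero
  · intro t ht
    rcases Finset.mem_insert.mp ht with rfl | ht'
    · omega
    rcases Finset.mem_insert.mp ht' with rfl | ht''
    · omega
    · exact le_of_lt (Finset.mem_Ioo.mp (hS1 ht'')).2
  · have h30S : (30 : ℕ) ∉ S := fun h => by simpa using (Finset.mem_Ioo.mp (hS1 h)).2
    have h0i : (0 : ℕ) ∉ insert 30 S := by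
      simp only [Finset.mem_insert]
      rintro (h | h)
      · omega
      · simpa using (Finset.mem_Ioo.mp (hS1 h)).1
    rw [TS, Finset.card_insert_of_notMem h0i, Finset.card_insert_of_notMem h30S]
    have := Finset.card_pos.mpr (Finset.nonempty_of_ne_empty hSne)
    omega

theorem ratio_thirty_tendsto' :
    Filter.Tendsto (fun p : ℕ => (Ncount p [30] : ℝ) / (Ncount p [2] : ℝ))
      (Filter.atTop ⊓ Filter.principal {p : ℕ | p.Prime}) (nhds (8 / 3)) := by
  classical
  rw [tendsto_iff_norm_sub_tendsto_zero]
  apply squeeze_zero' (Filter.Eventually.of_forall fun p => norm_nonneg _) ?_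
    (Gsum_tendsto.mono_left inf_le_left)
  rw [Filter.eventually_inf_principal]
  filter_upwards [Filter.eventually_ge_atTop 5] with p hp5 _hpprime
  have hp2 : 2 ≤ p := by omega
  have hD1 : (1 : ℝ) ≤ (Aprod p {0, 2} : ℝ) := by exact_mod_cast one_le_D p
  have hDpos : (0 : ℝ) < (Aprod p {0, 2} : ℝ) := by linarith
  have hN2 : (Ncount p [2] : ℝ) = (Aprod p {0, 2} : ℝ) := by
    exact_mod_cast congrArg (fun n : ℕ => (n : ℝ)) (ncount2_eq p hp2)
  have hkey : 3 * (Aprod p {0, 30} : ℝ) = 8 * (Aprod p {0, 2} : ℝ) := by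
    exact_mod_cast key_identity hp5
  have hzabs : |(Ncount p [30] : ℤ) - (Aprod p {0, 30} : ℤ)|
      ≤ ∑ S ∈ SIdx, (Aprod p (TS S) : ℤ) := by
    rw [ncount30_eq p, add_sub_cancel_left]
    calc |∑ S ∈ SIdx, (-1 : ℤ) ^ S.card * (Acard (primorial p) (TS S) : ℤ)|
        ≤ ∑ S ∈ SIdx, |(-1 : ℤ) ^ S.card * (Acard (primorial p) (TS S) : ℤ)| :=
          Finset.abs_sum_le_sum_abs _ _
      _ = ∑ S ∈ SIdx, (Aprod p (TS S) : ℤ) := by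
          apply Finset.sum_congr rfl
          intro S _
          rw [abs_mul, abs_pow, abs_neg, abs_one, one_pow, one_mul,
            abs_of_nonneg (Int.ofNat_nonneg _), Acard_primorial']
  have habs : |(Ncount p [30] : ℝ) - (Aprod p {0, 30} : ℝ)|
      ≤ ∑ S ∈ SIdx, (Aprod p (TS S) : ℝ) := by
    exact_mod_cast hzabs
  calc ‖(Ncount p [30] : ℝ) / (Ncount p [2] : ℝ) - 8 / 3‖
      = |(Ncount p [30] : ℝ) - (Aprod p {0, 30} : ℝ)| / (Aprod p {0, 2} : ℝ) := by
        rw [hN2, Real.norm_eq_abs]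
        rw [show (Ncount p [30] : ℝ) / (Aprod p {0, 2} : ℝ) - 8 / 3
            = ((Ncount p [30] : ℝ) - (Aprod p {0, 30} : ℝ)) / (Aprod p {0, 2} : ℝ) by
          field_simp
          linear_combination hkey]
        rw [abs_div, abs_of_pos hDpos]
    _ ≤ (∑ S ∈ SIdx, (Aprod p (TS S) : ℝ)) / (Aprod p {0, 2} : ℝ) :=
        (div_le_div_iff_of_pos_right hDpos).mpr habs
    _ = ∑ S ∈ SIdx, termR p (TS S) := by
        rw [Finset.sum_div]
        rfl

end

theorem ratio_thirty_tendsto :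
    Filter.Tendsto (fun p : ℕ => (Ncount p [30] : ℝ) / (Ncount p [2] : ℝ))
      (Filter.atTop ⊓ Filter.principal {p : ℕ | p.Prime}) (nhds (8 / 3)) := by
  exact ratio_thirty_tendsto'
end
end
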